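/- arXiv:2311.03949 — 4 statements merged into one kernel-verified Lean document; each statement's English description precedes it below -/
import Mathlib

section
/- Let A and B be N×N complex matrices. The product A†B is lower triangular if and only if there exists a unitary matrix Q such that Q†A is upper triangular and Q†B is lower triangular. -/
open Matrix Submodule Module

local notation "⟪" x ", " y "⟫" => @inner ℂ _ _ x y

private lemma inner_right_span_zero {V : Type*} [NormedAddCommGroup V] [InnerProductSpace ℂ V]
    (u : V) (s : Set V) (h : ∀ x ∈ s, ⟪u, x⟫ = 0) {v : V} (hv : v ∈ span ℂ s) :
    ⟪u, v⟫ = 0 := by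
  have hle : span ℂ s ≤ LinearMap.ker ((innerSL ℂ u).toLinearMap) :=
    Submodule.span_le.2 fun x hx => LinearMap.mem_ker.2 (h x hx)
  exact hle hv

private lemma inner_left_span_zero {V : Type*} [NormedAddCommGroup V] [InnerProductSpace ℂ V]
    (u : V) (s : Set V) (h : ∀ x ∈ s, ⟪x, u⟫ = 0) {v : V} (hv : v ∈ span ℂ s) :
    ⟪v, u⟫ = 0 := by
  have := inner_right_span_zero u s (fun x hx => by
    rw [← inner_conj_symm, h x hx, map_zero]) hv
  rw [← inner_conj_symm, this, map_zero]

private lemma finrank_span_image_le {V : Type*} [NormedAddCommGroup V] [InnerProductSpace ℂ V]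
    {α : Type*} [DecidableEq V] (f : α → V) (s : Finset α) :
    finrank ℂ (span ℂ (f '' ↑s)) ≤ s.card := by
  have h1 : f '' ↑s = ↑(s.image f) := (Finset.coe_image).symm
  rw [h1]
  exact le_trans (finrank_span_finset_le_card (s.image f)) Finset.card_image_le

private lemma exists_q (N : ℕ) (a b : Fin N → EuclideanSpace ℂ (Fin N))
    (hab : ∀ i j : Fin N, i < j → ⟪a i, b j⟫ = 0) (n : ℕ) (hn : n ≤ N) :
    ∃ q : Fin N → EuclideanSpace ℂ (Fin N),
      (∀ i : Fin N, (i : ℕ) < n → ‖q i‖ = 1) ∧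
      (∀ i j : Fin N, (i : ℕ) < n → (j : ℕ) < n → i ≠ j → ⟪q i, q j⟫ = 0) ∧
      (∀ k : Fin N, (k : ℕ) < n → a k ∈ span ℂ (q '' Set.Iic k)) ∧
      (∀ k : Fin N, (k : ℕ) < n → ∀ m : Fin N, k < m → ⟪q k, b m⟫ = 0) := by
  classical
  induction n with
  | zero =>
    exact ⟨fun _ => 0, fun i h => absurd h (Nat.not_lt_zero _),
      fun i j h => absurd h (Nat.not_lt_zero _),
      fun k h => absurd h (Nat.not_lt_zero _),
      fun k h => absurd h (Nat.not_lt_zero _)⟩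
  | succ n ih =>
    obtain ⟨q, h1, h2, h3, h4⟩ := ih (le_of_lt hn)
    set jn : Fin N := ⟨n, hn⟩ with hjn
    set P : Submodule ℂ (EuclideanSpace ℂ (Fin N)) := span ℂ (q '' Set.Iio jn) with hP
    -- members of the generating set of P are orthogonal to b m for m > jn
    have hPgen : ∀ m : Fin N, jn < m → ∀ x ∈ q '' Set.Iio jn, ⟪x, b m⟫ = 0 := by
      rintro m hm x ⟨i, hi, rfl⟩
      exact h4 i hi m (lt_trans hi hm)
    have hPb : ∀ m : Fin N, jn < m → ∀ v ∈ P, ⟪v, b m⟫ = 0 := fun m hm v hv =>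
      inner_left_span_zero (b m) _ (hPgen m hm) hv
    -- obtain the new vector v
    have key : ∃ v : EuclideanSpace ℂ (Fin N), v ∈ Pᗮ ∧ v ≠ 0 ∧
        (∀ m : Fin N, jn < m → ⟪v, b m⟫ = 0) ∧ a jn ∈ P ⊔ span ℂ ({v} : Set _) := by
      by_cases haP : a jn ∈ P
      · -- dimension argument to find w ∈ T \ P
        have hrP : finrank ℂ P ≤ n := by
          have := finrank_span_image_le q (Finset.Iio jn)
          rwa [Finset.coe_Iio, Fin.card_Iio] at this
        have hrB : finrank ℂ (span ℂ (b '' Set.Ioi jn)) ≤ N - 1 - n := by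
          have := finrank_span_image_le b (Finset.Ioi jn)
          rwa [Finset.coe_Ioi, Fin.card_Ioi] at this
        have hrT : n + 1 ≤ finrank ℂ ((span ℂ (b '' Set.Ioi jn))ᗮ) := by
          have hsum := Submodule.finrank_add_finrank_orthogonal
            (𝕜 := ℂ) (span ℂ (b '' Set.Ioi jn))
          have hE : finrank ℂ (EuclideanSpace ℂ (Fin N)) = N := by
            simp [finrank_euclideanSpace]
          rw [hE] at hsum
          omega
        have hnle : ¬ ((span ℂ (b '' Set.Ioi jn))ᗮ ≤ P) := by
          intro hle
          have := Submodule.finrank_mono hle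
          omega
        have hex : ∃ w ∈ (span ℂ (b '' Set.Ioi jn))ᗮ, w ∉ P := by
          by_contra h
          push_neg at h
          exact hnle (fun x hx => h x hx)
        obtain ⟨w, hwT, hwP⟩ := hex
        refine ⟨w - (orthogonalProjection P w : EuclideanSpace ℂ (Fin N)),
          (by exact P.sub_starProjection_mem_orthogonal w), ?_, ?_, ?_⟩
        · intro h0
          apply hwP
          have : w = (orthogonalProjection P w : EuclideanSpace ℂ (Fin N)) := by
            rwa [sub_eq_zero] at h0
          rw [this]; exact SetLike.coe_mem _
        · intro m hm
          rw [inner_sub_left]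
          have hw : ⟪w, b m⟫ = 0 := by
            rw [← inner_conj_symm]
            rw [(Submodule.mem_orthogonal _ _).1 hwT (b m)
              (Submodule.subset_span ⟨m, hm, rfl⟩), map_zero]
          rw [hw, hPb m hm _ (SetLike.coe_mem _), sub_zero]
        · exact Submodule.mem_sup_left haP
      · refine ⟨a jn - (orthogonalProjection P (a jn) : EuclideanSpace ℂ (Fin N)),
          (by exact P.sub_starProjection_mem_orthogonal _), ?_, ?_, ?_⟩
        · intro h0
          apply haP
          have : a jn = (orthogonalProjection P (a jn) : EuclideanSpace ℂ (Fin N)) := by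
            rwa [sub_eq_zero] at h0
          rw [this]; exact SetLike.coe_mem _
        · intro m hm
          rw [inner_sub_left, hab jn m hm, hPb m hm _ (SetLike.coe_mem _), sub_zero]
        · have hmem : (orthogonalProjection P (a jn) : EuclideanSpace ℂ (Fin N)) +
              (a jn - (orthogonalProjection P (a jn) : EuclideanSpace ℂ (Fin N))) ∈
              P ⊔ span ℂ ({a jn -
                (orthogonalProjection P (a jn) : EuclideanSpace ℂ (Fin N))} : Set _) :=
            Submodule.add_mem _ (Submodule.mem_sup_left (SetLike.coe_mem _))
              (Submodule.mem_sup_right (Submodule.subset_span rfl))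
          have heq : (orthogonalProjection P (a jn) : EuclideanSpace ℂ (Fin N)) +
              (a jn - (orthogonalProjection P (a jn) : EuclideanSpace ℂ (Fin N))) = a jn := by
            abel
          rwa [heq] at hmem
    obtain ⟨v, hvP, hv0, hvb, hva⟩ := key
    set u : EuclideanSpace ℂ (Fin N) := (‖v‖ : ℂ)⁻¹ • v with hu
    have hnv : (‖v‖ : ℂ) ≠ 0 := by
      simpa using norm_ne_zero_iff.2 hv0
    have hun : ‖u‖ = 1 := by
      rw [hu, norm_smul]
      simp [norm_ne_zero_iff.2 hv0]
    set q' : Fin N → EuclideanSpace ℂ (Fin N) := Function.update q jn u with hq'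
    have hq'old : ∀ i : Fin N, i ≠ jn → q' i = q i := fun i hi =>
      Function.update_of_ne hi u q
    have hlt_ne : ∀ i : Fin N, (i : ℕ) < n → i ≠ jn := by
      intro i hi h; rw [h] at hi; exact absurd hi (by simp [hjn])
    have hq'jn : q' jn = u := Function.update_self jn u q
    -- u orthogonal to old q's
    have huq : ∀ i : Fin N, (i : ℕ) < n → ⟪q i, u⟫ = 0 := by
      intro i hi
      have hiP : q i ∈ P := Submodule.subset_span ⟨i, hi, rfl⟩
      have := (Submodule.mem_orthogonal P v).1 hvP (q i) hiP
      rw [hu, inner_smul_right, this, mul_zero]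
    have huq' : ∀ i : Fin N, (i : ℕ) < n → ⟪u, q i⟫ = 0 := by
      intro i hi
      rw [← inner_conj_symm, huq i hi, map_zero]
    refine ⟨q', ?_, ?_, ?_, ?_⟩
    · intro i hi
      rcases Nat.lt_succ_iff_lt_or_eq.1 hi with h | h
      · rw [hq'old i (hlt_ne i h)]; exact h1 i h
      · have : i = jn := Fin.ext h
        rw [this, hq'jn]; exact hun
    · intro i j hi hj hij
      rcases Nat.lt_succ_iff_lt_or_eq.1 hi with hi' | hi' <;>
        rcases Nat.lt_succ_iff_lt_or_eq.1 hj with hj' | hj'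
      · rw [hq'old i (hlt_ne i hi'), hq'old j (hlt_ne j hj')]; exact h2 i j hi' hj' hij
      · have : j = jn := Fin.ext hj'
        rw [this, hq'jn, hq'old i (hlt_ne i hi')]; exact huq i hi'
      · have : i = jn := Fin.ext hi'
        rw [this, hq'jn, hq'old j (hlt_ne j hj')]; exact huq' j hj'
      · exact absurd (Fin.ext (hi'.trans hj'.symm)) hij
    · intro k hk
      rcases Nat.lt_succ_iff_lt_or_eq.1 hk with hk' | hk'
      · have himg : q '' Set.Iic k = q' '' Set.Iic k := by
          apply Set.image_congr
          intro i hi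
          exact (hq'old i (hlt_ne i (lt_of_le_of_lt (Fin.le_def.1 (Set.mem_Iic.1 hi)) hk'))).symm
        rw [← himg]
        exact h3 k hk'
      · have hkjn : k = jn := Fin.ext hk'
        rw [hkjn]
        have hle : P ⊔ span ℂ ({v} : Set _) ≤ span ℂ (q' '' Set.Iic jn) := by
          apply sup_le
          · rw [hP, Submodule.span_le]
            rintro x ⟨i, hi, rfl⟩
            have hilt : i < jn := Set.mem_Iio.1 hi
            have hiq : q i = q' i := (hq'old i (ne_of_lt hilt)).symm
            rw [hiq]
            exact Submodule.subset_span ⟨i, Set.mem_Iic.2 (le_of_lt hilt), rfl⟩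
          · rw [Submodule.span_le, Set.singleton_subset_iff]
            have hveq : v = (‖v‖ : ℂ) • u := by
              rw [hu, smul_smul, mul_inv_cancel₀ hnv, one_smul]
            rw [hveq]
            apply Submodule.smul_mem
            rw [← hq'jn]
            exact Submodule.subset_span ⟨jn, Set.mem_Iic.2 (le_refl jn), rfl⟩
        exact hle hva
    · intro k hk m hm
      rcases Nat.lt_succ_iff_lt_or_eq.1 hk with hk' | hk'
      · rw [hq'old k (hlt_ne k hk')]; exact h4 k hk' m hm
      · have : k = jn := Fin.ext hk'
        rw [this, hq'jn, hu, inner_smul_left, hvb m (this ▸ hm), mul_zero]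

theorem simultaneous_triangularization (N : ℕ)
    (A B : Matrix (Fin N) (Fin N) ℂ) :
    (∀ i j : Fin N, i < j → (Aᴴ * B) i j = 0) ↔
      ∃ Q ∈ Matrix.unitaryGroup (Fin N) ℂ,
        (∀ i j : Fin N, j < i → (Qᴴ * A) i j = 0) ∧
        (∀ i j : Fin N, i < j → (Qᴴ * B) i j = 0) := by
  constructor
  · intro hlow
    set a : Fin N → EuclideanSpace ℂ (Fin N) := fun j => WithLp.toLp 2 (fun i => A i j) with ha
    set b : Fin N → EuclideanSpace ℂ (Fin N) := fun j => WithLp.toLp 2 (fun i => B i j) with hb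
    have hab : ∀ i j : Fin N, i < j → ⟪a i, b j⟫ = 0 := by
      intro i j hij
      have := hlow i j hij
      rw [Matrix.mul_apply] at this
      simpa [PiLp.inner_apply, RCLike.inner_apply, Matrix.conjTranspose_apply, ha, hb, mul_comm] using this
    obtain ⟨q, h1, h2, h3, h4⟩ := exists_q N a b hab N (le_refl N)
    set Q : Matrix (Fin N) (Fin N) ℂ := Matrix.of fun k i => q i k with hQ
    have hinnerA : ∀ i j : Fin N, (Qᴴ * A) i j = ⟪q i, a j⟫ := by
      intro i j
      simp [Matrix.mul_apply, PiLp.inner_apply, RCLike.inner_apply,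
        Matrix.conjTranspose_apply, hQ, ha, mul_comm]
    have hinnerB : ∀ i j : Fin N, (Qᴴ * B) i j = ⟪q i, b j⟫ := by
      intro i j
      simp [Matrix.mul_apply, PiLp.inner_apply, RCLike.inner_apply,
        Matrix.conjTranspose_apply, hQ, hb, mul_comm]
    refine ⟨Q, ?_, ?_, ?_⟩
    · rw [Matrix.mem_unitaryGroup_iff']
      ext i j
      have : (star Q * Q) i j = ⟪q i, q j⟫ := by
        simp [Matrix.mul_apply, PiLp.inner_apply, RCLike.inner_apply, Matrix.star_apply, hQ, mul_comm]
      rw [this]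
      by_cases hij : i = j
      · rw [hij, inner_self_eq_norm_sq_to_K, h1 j j.isLt]
        simp
      · rw [h2 i j i.isLt j.isLt hij, Matrix.one_apply_ne hij]
    · intro i j hji
      rw [hinnerA i j]
      refine inner_right_span_zero (q i) _ ?_ (h3 j j.isLt)
      rintro x ⟨k, hk, rfl⟩
      exact h2 i k i.isLt k.isLt (by intro h; rw [h] at hji; exact absurd (lt_of_le_of_lt hk hji) (lt_irrefl _))
    · intro i j hij
      rw [hinnerB i j]
      exact h4 i i.isLt j hij
  · rintro ⟨Q, hQu, hA, hB⟩
    intro i j hij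
    have hQQ : Q * Qᴴ = 1 := by
      have := Matrix.mem_unitaryGroup_iff.1 hQu
      simpa [Matrix.star_eq_conjTranspose] using this
    have hfact : Aᴴ * B = (Qᴴ * A)ᴴ * (Qᴴ * B) := by
      rw [Matrix.conjTranspose_mul, Matrix.conjTranspose_conjTranspose]
      calc Aᴴ * B = Aᴴ * 1 * B := by rw [Matrix.mul_one]
      _ = Aᴴ * (Q * Qᴴ) * B := by rw [hQQ]
      _ = Aᴴ * Q * (Qᴴ * B) := by rw [← Matrix.mul_assoc, ← Matrix.mul_assoc]
    rw [hfact, Matrix.mul_apply]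
    apply Finset.sum_eq_zero
    intro k _
    rcases lt_or_ge i k with h | h
    · rw [Matrix.conjTranspose_apply, hA k i h, star_zero, zero_mul]
    · rw [hB k j (lt_of_le_of_lt h hij), mul_zero]
end

section
/- Let P(z), Q(z) be complex polynomials of degree at most n with |P(z)|² + |Q(z)|² = 1 for all z on the unit circle, with n ≥ 1. Then there exists a 2×2 unitary matrix A such that the vector (P'(z), Q'(z))ᵀ := diag(1, z⁻¹) A† (P(z), Q(z))ᵀ consists of polynomials of degree at most n−1 satisfying |P'|² + |Q'|² = 1 on the unit circle. -/
open Matrix Polynomial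

private lemma circle_infinite : {z : ℂ | ‖z‖ = 1}.Infinite := by
  apply Set.infinite_of_injective_forall_mem
    (f := fun k : ℕ => Complex.exp ((1 / (k + 1) : ℝ) * Complex.I))
  case hi =>
    intro a b hab
    simp only [Complex.exp_eq_exp_iff_exists_int] at hab
    obtain ⟨j, hj⟩ := hab
    have h2 : ((1 / (a + 1) : ℝ) : ℂ) * Complex.I
        = (((1 / (b + 1) : ℝ) : ℂ) + (j : ℂ) * (2 * Real.pi)) * Complex.I := by
      rw [hj]; ring
    have h3 : ((1 / (a + 1) : ℝ) : ℂ) = ((1 / (b + 1) : ℝ) : ℂ) + (j : ℂ) * (2 * Real.pi) :=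
      mul_right_cancel₀ Complex.I_ne_zero h2
    have h4 : (1 / (a + 1) : ℝ) = 1 / (b + 1) + (j : ℝ) * (2 * Real.pi) := by
      exact_mod_cast h3
    have ha0 : (0:ℝ) < (a:ℝ) + 1 := by positivity
    have hb0 : (0:ℝ) < (b:ℝ) + 1 := by positivity
    have ha1 : (1 / ((a:ℝ) + 1)) ≤ 1 := by
      rw [div_le_one ha0]; linarith [Nat.cast_nonneg (α := ℝ) a]
    have hb1 : (1 / ((b:ℝ) + 1)) ≤ 1 := by
      rw [div_le_one hb0]; linarith [Nat.cast_nonneg (α := ℝ) b]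
    have ha2 : (0:ℝ) < 1 / ((a:ℝ) + 1) := by positivity
    have hb2 : (0:ℝ) < 1 / ((b:ℝ) + 1) := by positivity
    have hj0 : j = 0 := by
      by_contra hj0
      have h5 : (1:ℝ) ≤ |(j:ℝ)| := by
        exact_mod_cast Int.one_le_abs (by simpa using hj0)
      have hpi : (6:ℝ) < 2 * Real.pi := by nlinarith [Real.pi_gt_three]
      have h6 : |(j:ℝ) * (2 * Real.pi)| = |(j:ℝ)| * (2 * Real.pi) := by
        rw [abs_mul, abs_of_pos (show (0:ℝ) < 2 * Real.pi by linarith)]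
      have h7 : |(j:ℝ) * (2 * Real.pi)| < 1 := by
        have : (j:ℝ) * (2 * Real.pi) = 1 / ((a:ℝ)+1) - 1 / ((b:ℝ)+1) := by linarith
        rw [this, abs_sub_lt_iff]; constructor <;> linarith
      nlinarith
    rw [hj0] at h4
    simp only [Int.cast_zero, zero_mul, add_zero] at h4
    field_simp at h4
    exact_mod_cast (add_right_cancel h4).symm
  case hf =>
    intro k
    exact Complex.norm_exp_ofReal_mul_I _

private noncomputable def tilde (n : ℕ) (P : Polynomial ℂ) : Polynomial ℂ :=
  ∑ k ∈ Finset.range (n + 1), C ((starRingEnd ℂ) (P.coeff k)) * X ^ (n - k)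

private lemma tilde_natDegree_le (n : ℕ) (P : Polynomial ℂ) : (tilde n P).natDegree ≤ n := by
  apply Polynomial.natDegree_sum_le_of_forall_le
  intro k hk
  refine (Polynomial.natDegree_C_mul_le _ _).trans ?_
  simpa using Nat.sub_le n k

private lemma tilde_coeff_n (n : ℕ) (P : Polynomial ℂ) :
    (tilde n P).coeff n = (starRingEnd ℂ) (P.coeff 0) := by
  rw [tilde, Polynomial.finset_sum_coeff]
  rw [Finset.sum_eq_single 0]
  · simp
  · intro k hk hk0
    rw [Polynomial.coeff_C_mul, Polynomial.coeff_X_pow, if_neg, mul_zero]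
    have := Finset.mem_range.mp hk
    omega
  · simp

private lemma tilde_eval (n : ℕ) (P : Polynomial ℂ) (hP : P.natDegree ≤ n) (z : ℂ)
    (hz : ‖z‖ = 1) :
    (tilde n P).eval z = z ^ n * (starRingEnd ℂ) (P.eval z) := by
  have hz1 : z * (starRingEnd ℂ) z = 1 := by
    rw [Complex.mul_conj]
    norm_cast
    rw [← Complex.sq_norm, hz, one_pow]
  rw [tilde, Polynomial.eval_finset_sum]
  rw [Polynomial.eval_eq_sum_range' (Nat.lt_succ_of_le hP), map_sum, Finset.mul_sum]
  apply Finset.sum_congr rfl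
  intro k hk
  have hkn : k ≤ n := Nat.lt_succ_iff.mp (Finset.mem_range.mp hk)
  simp only [Polynomial.eval_mul, Polynomial.eval_C, Polynomial.eval_pow, Polynomial.eval_X,
    _root_.map_mul, map_pow]
  have : z ^ n * ((starRingEnd ℂ) z) ^ k = z ^ (n - k) := by
    calc z ^ n * ((starRingEnd ℂ) z) ^ k = z ^ (n - k) * (z * (starRingEnd ℂ) z) ^ k := by
          rw [mul_pow, ← mul_assoc, ← pow_add, Nat.sub_add_cancel hkn]
      _ = z ^ (n - k) := by rw [hz1, one_pow, mul_one]
  rw [← this]; ring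

private lemma key_identity (n : ℕ) (hn : 1 ≤ n) (P Q : Polynomial ℂ)
    (hP : P.natDegree ≤ n) (hQ : Q.natDegree ≤ n)
    (hnorm : ∀ z : ℂ, ‖z‖ = 1 →
      ‖P.eval z‖ ^ 2 + ‖Q.eval z‖ ^ 2 = 1) :
    P.coeff n * (starRingEnd ℂ) (P.coeff 0) + Q.coeff n * (starRingEnd ℂ) (Q.coeff 0) = 0 := by
  set R : Polynomial ℂ := P * tilde n P + Q * tilde n Q - X ^ n with hR
  have hR0 : R = 0 := by
    apply Polynomial.eq_zero_of_infinite_isRoot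
    apply Set.Infinite.mono _ circle_infinite
    intro z hz
    simp only [Set.mem_setOf_eq] at hz ⊢
    have h1 : P.eval z * (starRingEnd ℂ) (P.eval z) + Q.eval z * (starRingEnd ℂ) (Q.eval z)
        = 1 := by
      rw [Complex.mul_conj, Complex.mul_conj]
      norm_cast
      rw [← Complex.sq_norm, ← Complex.sq_norm]
      exact_mod_cast hnorm z hz
    show R.eval z = 0
    rw [hR]
    simp only [Polynomial.eval_sub, Polynomial.eval_add, Polynomial.eval_mul,
      Polynomial.eval_pow, Polynomial.eval_X]
    rw [tilde_eval n P hP z hz, tilde_eval n Q hQ z hz]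
    calc P.eval z * (z ^ n * (starRingEnd ℂ) (P.eval z))
          + Q.eval z * (z ^ n * (starRingEnd ℂ) (Q.eval z)) - z ^ n
        = z ^ n * (P.eval z * (starRingEnd ℂ) (P.eval z)
            + Q.eval z * (starRingEnd ℂ) (Q.eval z)) - z ^ n := by ring
      _ = 0 := by rw [h1]; ring
  have hc : R.coeff (n + n) = 0 := by rw [hR0]; simp
  rw [hR] at hc
  simp only [Polynomial.coeff_sub, Polynomial.coeff_add] at hc
  rw [Polynomial.coeff_mul_add_eq_of_natDegree_le hP (tilde_natDegree_le n P),
    Polynomial.coeff_mul_add_eq_of_natDegree_le hQ (tilde_natDegree_le n Q),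
    Polynomial.coeff_X_pow, if_neg (by omega)] at hc
  rw [tilde_coeff_n, tilde_coeff_n] at hc
  linear_combination hc

private lemma unitary_helper (α β : ℂ) (r : ℝ) (hrC : (r:ℂ) ≠ 0)
    (hrrC : (r : ℂ) * (r : ℂ) = (Complex.normSq α : ℂ) + (Complex.normSq β : ℂ)) :
    (!![-(starRingEnd ℂ) β / r, α / r; (starRingEnd ℂ) α / r, β / r] : Matrix (Fin 2) (Fin 2) ℂ)
      ∈ Matrix.unitaryGroup (Fin 2) ℂ := by
  rw [Matrix.mem_unitaryGroup_iff']
  ext i j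
  fin_cases i <;> fin_cases j <;>
    simp only [Matrix.star_eq_conjTranspose, Matrix.mul_apply, Fin.sum_univ_two,
      Matrix.conjTranspose_apply, Matrix.one_apply, Matrix.cons_val', Matrix.cons_val_zero,
      Matrix.cons_val_one, Matrix.head_cons, Matrix.head_fin_const, Matrix.empty_val',
      Matrix.cons_val_fin_one, Matrix.of_apply, Complex.star_def, map_div₀, map_neg, Complex.conj_ofReal,
      Complex.conj_conj, Fin.mk_zero, Fin.mk_one, ne_eq, one_ne_zero, zero_ne_one,
      not_false_eq_true, if_true, if_false, if_neg, if_pos] <;>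
    field_simp <;>
    first
      | ring1
      | linear_combination Complex.mul_conj β + Complex.mul_conj α - hrrC
      | linear_combination Complex.mul_conj α + Complex.mul_conj β - hrrC
      | linear_combination hrrC - Complex.mul_conj β - Complex.mul_conj α
      | linear_combination hrrC - Complex.mul_conj α - Complex.mul_conj β

private lemma norm_helper (α β e f : ℂ) (r : ℝ) (hrC : (r:ℂ) ≠ 0)
    (hrrC : (r : ℂ) * (r : ℂ) = (Complex.normSq α : ℂ) + (Complex.normSq β : ℂ))
    (hef : e * (starRingEnd ℂ) e + f * (starRingEnd ℂ) f = 1) :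
    ((-β / r) * e + (α / r) * f) * (starRingEnd ℂ) ((-β / r) * e + (α / r) * f)
      + (((starRingEnd ℂ) α / r) * e + ((starRingEnd ℂ) β / r) * f)
        * (starRingEnd ℂ) (((starRingEnd ℂ) α / r) * e + ((starRingEnd ℂ) β / r) * f) = 1 := by
  simp only [map_add, _root_.map_mul, map_div₀, map_neg, Complex.conj_ofReal, Complex.conj_conj]
  field_simp
  linear_combination ((α * (starRingEnd ℂ) α + β * (starRingEnd ℂ) β) * hef
    + Complex.mul_conj α + Complex.mul_conj β - hrrC)

theorem single_step_reduction (n : ℕ) (hn : 1 ≤ n) (P Q : Polynomial ℂ)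
    (hP : P.natDegree ≤ n) (hQ : Q.natDegree ≤ n)
    (hnorm : ∀ z : ℂ, ‖z‖ = 1 →
      ‖P.eval z‖ ^ 2 + ‖Q.eval z‖ ^ 2 = 1) :
    ∃ A ∈ Matrix.unitaryGroup (Fin 2) ℂ, ∃ P' Q' : Polynomial ℂ,
      P'.natDegree ≤ n - 1 ∧ Q'.natDegree ≤ n - 1 ∧
      (∀ z : ℂ, ‖z‖ = 1 →
        ‖P'.eval z‖ ^ 2 + ‖Q'.eval z‖ ^ 2 = 1) ∧
      (∀ z : ℂ, ‖z‖ = 1 →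
        P'.eval z = (Aᴴ.mulVec ![P.eval z, Q.eval z]) 0 ∧
        Q'.eval z = z⁻¹ * (Aᴴ.mulVec ![P.eval z, Q.eval z]) 1) := by
  obtain ⟨α, β, hne, h1, h2⟩ : ∃ α β : ℂ, (¬(α = 0 ∧ β = 0)) ∧
      β * P.coeff n = α * Q.coeff n ∧
      (starRingEnd ℂ) α * P.coeff 0 + (starRingEnd ℂ) β * Q.coeff 0 = 0 := by
    by_cases hu : P.coeff n = 0 ∧ Q.coeff n = 0
    · by_cases hv : P.coeff 0 = 0 ∧ Q.coeff 0 = 0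
      · exact ⟨0, 1, by simp, by simp [hu.1, hu.2], by simp [hv.1, hv.2]⟩
      · refine ⟨-(starRingEnd ℂ) (Q.coeff 0), (starRingEnd ℂ) (P.coeff 0), ?_, ?_, ?_⟩
        · intro h
          obtain ⟨ha, hb⟩ := h
          exact hv ⟨by simpa using hb, by simpa using neg_eq_zero.mp ha⟩
        · simp [hu.1, hu.2]
        · simp only [map_neg, Complex.conj_conj]; ring
    · refine ⟨P.coeff n, Q.coeff n, hu, by ring, ?_⟩
      have key := key_identity n hn P Q hP hQ hnorm
      have hkc := congrArg (starRingEnd ℂ) key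
      simp only [map_add, _root_.map_mul, Complex.conj_conj, map_zero] at hkc
      linear_combination hkc
  set s : ℝ := Complex.normSq α + Complex.normSq β with hs
  have hspos : 0 < s := by
    rcases not_and_or.mp hne with h | h
    · have := Complex.normSq_pos.mpr h
      have := Complex.normSq_nonneg β; rw [hs]; linarith
    · have := Complex.normSq_pos.mpr h
      have := Complex.normSq_nonneg α; rw [hs]; linarith
  set r : ℝ := Real.sqrt s with hr
  have hr0 : 0 < r := Real.sqrt_pos.mpr hspos
  have hrr : r * r = s := Real.mul_self_sqrt hspos.le
  have hrC : (r : ℂ) ≠ 0 := by exact_mod_cast hr0.ne'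
  have hrrC : (r : ℂ) * (r : ℂ) = (Complex.normSq α : ℂ) + (Complex.normSq β : ℂ) := by
    rw [hs] at hrr; exact_mod_cast hrr
  set A : Matrix (Fin 2) (Fin 2) ℂ :=
    !![-(starRingEnd ℂ) β / r, α / r; (starRingEnd ℂ) α / r, β / r] with hA
  have hAU : A ∈ Matrix.unitaryGroup (Fin 2) ℂ := hA ▸ unitary_helper α β r hrC hrrC
  set P' : Polynomial ℂ := C (-β / r) * P + C (α / r) * Q with hP'
  set Q'' : Polynomial ℂ := C ((starRingEnd ℂ) α / r) * P + C ((starRingEnd ℂ) β / r) * Q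
    with hQ''d
  set Q' : Polynomial ℂ := Q''.divX with hQ'd
  have hP'coeff : P'.coeff n = 0 := by
    rw [hP']
    simp only [Polynomial.coeff_add, Polynomial.coeff_C_mul]
    linear_combination (-(1:ℂ)/(r:ℂ)) * h1
  have hP'deg : P'.natDegree ≤ n - 1 := by
    have hle : P'.natDegree ≤ n := le_trans (Polynomial.natDegree_add_le _ _)
      (max_le ((Polynomial.natDegree_C_mul_le _ _).trans hP)
        ((Polynomial.natDegree_C_mul_le _ _).trans hQ))
    rcases eq_or_ne P' 0 with h0 | h0
    · simp [h0]
    · have hne' : P'.natDegree ≠ n := by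
        intro he
        apply Polynomial.leadingCoeff_ne_zero.mpr h0
        rw [Polynomial.leadingCoeff, he]; exact hP'coeff
      omega
  have hQ''0 : Q''.coeff 0 = 0 := by
    rw [hQ''d]
    simp only [Polynomial.coeff_add, Polynomial.coeff_C_mul]
    linear_combination ((1:ℂ)/(r:ℂ)) * h2
  have hQ''deg : Q''.natDegree ≤ n := le_trans (Polynomial.natDegree_add_le _ _)
    (max_le ((Polynomial.natDegree_C_mul_le _ _).trans hP)
      ((Polynomial.natDegree_C_mul_le _ _).trans hQ))
  have hQ'deg : Q'.natDegree ≤ n - 1 := by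
    rw [hQ'd, Polynomial.natDegree_divX_eq_natDegree_tsub_one]; omega
  have hQfac : Q' * X = Q'' := by
    have h := Polynomial.divX_mul_X_add Q''
    rwa [hQ''0, map_zero, add_zero] at h
  have hmv0 : ∀ z : ℂ, (Aᴴ.mulVec ![P.eval z, Q.eval z]) 0
      = (-β / r) * P.eval z + (α / r) * Q.eval z := by
    intro z
    simp [hA, Matrix.mulVec, dotProduct, Fin.sum_univ_two,
      Matrix.conjTranspose_apply, map_div₀, map_neg, Complex.conj_ofReal, Complex.conj_conj]
  have hmv1 : ∀ z : ℂ, (Aᴴ.mulVec ![P.eval z, Q.eval z]) 1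
      = ((starRingEnd ℂ) α / r) * P.eval z + ((starRingEnd ℂ) β / r) * Q.eval z := by
    intro z
    simp [hA, Matrix.mulVec, dotProduct, Fin.sum_univ_two,
      Matrix.conjTranspose_apply, map_div₀, map_neg, Complex.conj_ofReal, Complex.conj_conj]
  have hP'ev : ∀ z : ℂ, P'.eval z = (-β / r) * P.eval z + (α / r) * Q.eval z := by
    intro z; rw [hP']; simp
  have hQ''ev : ∀ z : ℂ, Q''.eval z
      = ((starRingEnd ℂ) α / r) * P.eval z + ((starRingEnd ℂ) β / r) * Q.eval z := by
    intro z; rw [hQ''d]; simp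
  have hQ'ev : ∀ z : ℂ, z ≠ 0 → Q'.eval z = z⁻¹ * Q''.eval z := by
    intro z hz0
    have h : Q'.eval z * z = Q''.eval z := by
      rw [← hQfac]; simp
    field_simp
    linear_combination h
  refine ⟨A, hAU, P', Q', hP'deg, hQ'deg, ?_, ?_⟩
  · intro z hz
    have hz0 : z ≠ 0 := by intro h; rw [h] at hz; simp at hz
    have hef : P.eval z * (starRingEnd ℂ) (P.eval z)
        + Q.eval z * (starRingEnd ℂ) (Q.eval z) = 1 := by
      rw [Complex.mul_conj, Complex.mul_conj]
      norm_cast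
      rw [← Complex.sq_norm, ← Complex.sq_norm]
      exact_mod_cast hnorm z hz
    have hkey : P'.eval z * (starRingEnd ℂ) (P'.eval z)
        + Q''.eval z * (starRingEnd ℂ) (Q''.eval z) = 1 := by
      rw [hP'ev z, hQ''ev z]
      exact norm_helper α β (P.eval z) (Q.eval z) r hrC hrrC hef
    have habs : ‖P'.eval z‖ ^ 2 + ‖Q''.eval z‖ ^ 2 = 1 := by
      rw [Complex.mul_conj, Complex.mul_conj] at hkey
      rw [Complex.sq_norm, Complex.sq_norm]
      exact_mod_cast hkey
    rw [hQ'ev z hz0, norm_mul, norm_inv, hz, inv_one, one_mul]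
    exact habs
  · intro z hz
    have hz0 : z ≠ 0 := by intro h; rw [h] at hz; simp at hz
    exact ⟨by rw [hP'ev z, hmv0 z], by rw [hQ'ev z hz0, hmv1 z, hQ''ev z]⟩
end

section
/- Polynomial state completion: Let P_0, …, P_{m−1} be Laurent polynomials in z of degree at most n (i.e., supported on exponents in [−n, n]) such that ∑_{x=0}^{m−1} |P_x(z)|² ≤ 1 for all z on the unit circle. Then there exists a Laurent polynomial P_m of degree at most n such that ∑_{x=0}^{m} |P_x(z)|² = 1 for all z on the unit circle. -/
open Polynomial ComplexConjugate

/-- The complex absolute value, as an `AbsoluteValue`. -/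
noncomputable def Complex.abs : AbsoluteValue ℂ ℝ where
  toFun := fun z => ‖z‖
  map_mul' := norm_mul
  nonneg' := norm_nonneg
  eq_zero' := fun _ => norm_eq_zero
  add_le' := norm_add_le

lemma Complex.norm_eq_abs (z : ℂ) : ‖z‖ = Complex.abs z := rfl

lemma Complex.abs_conj (z : ℂ) : Complex.abs (conj z) = Complex.abs z := Complex.norm_conj z

lemma Complex.normSq_eq_abs (z : ℂ) : Complex.normSq z = Complex.abs z ^ 2 :=
  Complex.normSq_eq_norm_sq z

lemma Complex.abs_ofReal (r : ℝ) : Complex.abs (r : ℂ) = |r| := Complex.norm_real r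

lemma Complex.abs_natCast (k : ℕ) : Complex.abs (k : ℂ) = k := Complex.norm_natCast k

@[simp]
lemma Complex.abs_ofNat (k : ℕ) [k.AtLeastTwo] :
    Complex.abs (OfNat.ofNat k : ℂ) = OfNat.ofNat k := Complex.norm_ofNat k

lemma Complex.continuous_abs : Continuous Complex.abs := continuous_norm

lemma Complex.abs_re_le_abs (z : ℂ) : |z.re| ≤ Complex.abs z := Complex.abs_re_le_norm z

/-- `reflect` is an involution. -/
lemma reflect_reflect' (N : ℕ) (p : Polynomial ℂ) :
    reflect N (reflect N p) = p := by
  ext i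
  rw [coeff_reflect, coeff_reflect, revAt_invol]

lemma eval_reflect' (N : ℕ) (p : Polynomial ℂ) (hp : p.natDegree ≤ N) {z : ℂ}
    (hz : z ≠ 0) : (Polynomial.reflect N p).eval z⁻¹ * z ^ N = p.eval z := by
  letI := invertibleOfNonzero hz
  have h := Polynomial.eval₂_reflect_mul_pow (RingHom.id ℂ) z N p hp
  rw [invOf_eq_inv z] at h
  exact h

lemma map_conj_map_conj (p : Polynomial ℂ) :
    (p.map (starRingEnd ℂ)).map (starRingEnd ℂ) = p := by
  rw [Polynomial.map_map]
  convert Polynomial.map_id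
  ext x
  exact Complex.conj_conj x

lemma reflect_finset_sum {α : Type*} (N : ℕ) (s : Finset α) (f : α → Polynomial ℂ) :
    reflect N (∑ x ∈ s, f x) = ∑ x ∈ s, reflect N (f x) := by
  classical
  induction s using Finset.cons_induction with
  | empty => simp [reflect_zero]
  | cons a s ha ih => rw [Finset.sum_cons, Finset.sum_cons, reflect_add, ih]

lemma reflect_one' : reflect 0 (1 : Polynomial ℂ) = 1 := by
  rw [← C_1, reflect_C]; simp

lemma reflect_lin (b : ℂ) : reflect 1 ((X : Polynomial ℂ) - C b) = 1 - C b * X := by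
  rw [reflect_sub, reflect_C, ← pow_one (X : Polynomial ℂ), reflect_monomial]
  norm_num [revAt_le]

lemma reflect_pow_X_sub_C (m : ℕ) (b : ℂ) :
    reflect m ((X - C b) ^ m) = (1 - C b * X) ^ m := by
  induction m with
  | zero => simpa using reflect_one'
  | succ m ih =>
    have h1 : ((X : Polynomial ℂ) - C b).natDegree ≤ 1 := (natDegree_X_sub_C b).le
    have h2 : (((X : Polynomial ℂ) - C b) ^ m).natDegree ≤ m := by
      apply natDegree_pow_le.trans
      simp [natDegree_X_sub_C b]
    calc reflect (m + 1) ((X - C b) ^ (m + 1))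
        = reflect (1 + m) ((X - C b) * (X - C b) ^ m) := by rw [add_comm 1 m, pow_succ']
      _ = reflect 1 (X - C b) * reflect m ((X - C b) ^ m) := reflect_mul _ _ h1 h2
      _ = (1 - C b * X) ^ (m + 1) := by rw [ih, reflect_lin, ← pow_succ']

lemma herm_dvd (D : ℕ) (q : Polynomial ℂ) (hq : reflect D (q.map (starRingEnd ℂ)) = q)
    (hq0 : q ≠ 0) (hdeg : q.natDegree ≤ D) {β : ℂ} (hβ : β ≠ 0) (m : ℕ)
    (hdvd : (X - C β) ^ m ∣ q) : (X - C ((conj β)⁻¹)) ^ m ∣ q := by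
  obtain ⟨g, hg⟩ := hdvd
  have hXm : (((X : Polynomial ℂ) - C β) ^ m) ≠ 0 := pow_ne_zero _ (X_sub_C_ne_zero β)
  have hgne : g ≠ 0 := by rintro rfl; simp [hg] at hq0
  have hdm : (((X : Polynomial ℂ) - C β) ^ m).natDegree = m := by
    simp [natDegree_pow, natDegree_X_sub_C]
  have hqdeg : q.natDegree = m + g.natDegree := by
    rw [hg, natDegree_mul hXm hgne, hdm]
  have hm : m ≤ D := le_trans (by omega) hdeg
  have hgd : (g.map (starRingEnd ℂ)).natDegree ≤ D - m := by
    refine natDegree_map_le.trans ?_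
    omega
  have hmap : (((X - C β) ^ m * g).map (starRingEnd ℂ))
      = (X - C (conj β)) ^ m * g.map (starRingEnd ℂ) := by
    simp [Polynomial.map_mul, Polynomial.map_pow, Polynomial.map_sub]
  have hpowdeg : (((X : Polynomial ℂ) - C (conj β)) ^ m).natDegree ≤ m := by
    simp [natDegree_pow, natDegree_X_sub_C]
  have hcb : conj β ≠ 0 := by simpa using hβ
  have hrm := reflect_mul ((X - C (conj β)) ^ m) (g.map (starRingEnd ℂ)) hpowdeg hgd
  rw [show m + (D - m) = D from by omega] at hrm
  have key : q = (1 - C (conj β) * X) ^ m *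
      reflect (D - m) (g.map (starRingEnd ℂ)) := by
    conv_lhs => rw [← hq, hg, hmap]
    rw [hrm, reflect_pow_X_sub_C]
  have h2 : C (conj β) * C ((conj β)⁻¹) = (1 : Polynomial ℂ) := by
    rw [← C_mul, mul_inv_cancel₀ hcb, C_1]
  have hfac : (1 : Polynomial ℂ) - C (conj β) * X
      = (-C (conj β)) * (X - C ((conj β)⁻¹)) := by
    calc (1 : Polynomial ℂ) - C (conj β) * X
        = C (conj β) * C ((conj β)⁻¹) - C (conj β) * X := by rw [h2]
      _ = (-C (conj β)) * (X - C ((conj β)⁻¹)) := by ring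
  rw [key, hfac, mul_pow]
  exact ⟨(-C (conj β)) ^ m * reflect (D - m) (g.map (starRingEnd ℂ)), by ring⟩

lemma herm_rootMult (D : ℕ) (q : Polynomial ℂ) (hq : reflect D (q.map (starRingEnd ℂ)) = q)
    (hq0 : q ≠ 0) (hdeg : q.natDegree ≤ D) {β : ℂ} (hβ : β ≠ 0) :
    rootMultiplicity ((conj β)⁻¹) q = rootMultiplicity β q := by
  have hι : ∀ γ : ℂ, γ ≠ 0 → rootMultiplicity β q ≤ rootMultiplicity ((conj γ)⁻¹) q
      → True := fun _ _ _ => trivial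
  have step : ∀ γ : ℂ, γ ≠ 0 →
      rootMultiplicity γ q ≤ rootMultiplicity ((conj γ)⁻¹) q := by
    intro γ hγ
    rw [le_rootMultiplicity_iff hq0]
    exact herm_dvd D q hq hq0 hdeg hγ _ (pow_rootMultiplicity_dvd q γ)
  have hββ : ((conj ((conj β)⁻¹))⁻¹ : ℂ) = β := by
    rw [map_inv₀, Complex.conj_conj, inv_inv]
  have h1 := step β hβ
  have h2 := step ((conj β)⁻¹) (by simp [hβ])
  rw [hββ] at h2
  omega

lemma iota_invol : Function.Involutive (fun α : ℂ => (conj α)⁻¹) := by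
  intro α; simp [map_inv₀]

lemma herm_roots_map (D : ℕ) (q : Polynomial ℂ)
    (hq : reflect D (q.map (starRingEnd ℂ)) = q) (hdeg : q.natDegree ≤ D)
    (h0 : q.coeff 0 ≠ 0) :
    q.roots.map (fun α => (conj α)⁻¹) = q.roots := by
  have hq0 : q ≠ 0 := fun h => h0 (by simp [h])
  have hinj := iota_invol.injective
  ext a
  calc Multiset.count a (q.roots.map fun α => (conj α)⁻¹)
      = Multiset.count ((fun α : ℂ => (conj α)⁻¹) ((conj a)⁻¹))
          (q.roots.map fun α => (conj α)⁻¹) := by rw [iota_invol a]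
    _ = Multiset.count ((conj a)⁻¹) q.roots :=
        Multiset.count_map_eq_count' _ _ hinj _
    _ = Multiset.count a q.roots := by
        rw [count_roots, count_roots]
        by_cases ha : a = 0
        · subst ha; norm_num
        · exact herm_rootMult D q hq hq0 hdeg ha

lemma abs_sub_conj_inv {z α : ℂ} (hz : Complex.abs z = 1) (hα : α ≠ 0) :
    Complex.abs (z - (conj α)⁻¹) = Complex.abs (z - α) / Complex.abs α := by
  have hcα : conj α ≠ 0 := by simpa using hα
  have h1 : z * conj z = 1 := by
    rw [Complex.mul_conj]
    norm_cast
    rw [Complex.normSq_eq_abs, hz]; norm_num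
  have h2 : z - (conj α)⁻¹ = z * conj (α - z) * (conj α)⁻¹ := by
    rw [map_sub, mul_sub, h1]
    field_simp
  rw [h2, map_mul, map_mul, map_inv₀, Complex.abs_conj, Complex.abs_conj, hz,
    one_mul, Complex.abs.map_sub α z, div_eq_mul_inv]

lemma herm_roots_split (D : ℕ) (q : Polynomial ℂ)
    (hq : reflect D (q.map (starRingEnd ℂ)) = q) (hdeg : q.natDegree ≤ D)
    (h0 : q.coeff 0 ≠ 0) (hcirc : ∀ z, Complex.abs z = 1 → q.eval z ≠ 0) :
    q.roots = (q.roots.filter (fun α => Complex.abs α < 1)) +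
      (q.roots.filter (fun α => Complex.abs α < 1)).map (fun α => (conj α)⁻¹) := by
  classical
  have hq0 : q ≠ 0 := fun h => h0 (by simp [h])
  have hmem : ∀ α ∈ q.roots, α ≠ 0 ∧ Complex.abs α ≠ 1 := by
    intro α hα
    have hroot : q.eval α = 0 := (Polynomial.mem_roots hq0).mp hα
    constructor
    · rintro rfl
      rw [← Polynomial.coeff_zero_eq_eval_zero] at hroot
      exact h0 hroot
    · intro habs
      exact hcirc α habs hroot
  conv_lhs => rw [← Multiset.filter_add_not (fun α => Complex.abs α < 1) q.roots]
  congr 1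
  calc Multiset.filter (fun α => ¬ Complex.abs α < 1) q.roots
      = Multiset.filter (fun α => ¬ Complex.abs α < 1)
          (q.roots.map (fun α => (conj α)⁻¹)) := by
        rw [herm_roots_map D q hq hdeg h0]
    _ = (q.roots.filter ((fun α => ¬ Complex.abs α < 1) ∘ (fun α => (conj α)⁻¹))).map
          (fun α => (conj α)⁻¹) := Multiset.filter_map _ _ _
    _ = (q.roots.filter (fun α => Complex.abs α < 1)).map (fun α => (conj α)⁻¹) := by
        congr 1
        apply Multiset.filter_congr
        intro α hα
        obtain ⟨h0', h1'⟩ := hmem α hα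
        have hpos : 0 < Complex.abs α := Complex.abs.pos h0'
        have habsinv : Complex.abs ((conj α)⁻¹) = (Complex.abs α)⁻¹ := by
          rw [map_inv₀, Complex.abs_conj]
        have hinv : Complex.abs α * (Complex.abs α)⁻¹ = 1 :=
          mul_inv_cancel₀ (ne_of_gt hpos)
        simp only [Function.comp, habsinv]
        constructor
        · intro h
          rw [not_lt] at h
          have hle : Complex.abs α ≤ 1 := by nlinarith
          exact lt_of_le_of_ne hle h1'
        · intro h hcon
          nlinarith

lemma halfFactor (N : ℕ) (q : Polynomial ℂ)
    (hq : reflect (2 * N) (q.map (starRingEnd ℂ)) = q)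
    (hdeg : q.natDegree ≤ 2 * N) (h0 : q.coeff 0 ≠ 0)
    (hcirc : ∀ z, Complex.abs z = 1 → q.eval z ≠ 0) :
    ∃ w : Polynomial ℂ, w.natDegree ≤ N ∧
      ∀ z, Complex.abs z = 1 → (Complex.abs (w.eval z)) ^ 2 = Complex.abs (q.eval z) := by
  classical
  have hq0 : q ≠ 0 := fun h => h0 (by simp [h])
  have htop : q.coeff (2 * N) = conj (q.coeff 0) := by
    conv_lhs => rw [← hq]
    rw [coeff_reflect, revAt_le (le_refl (2 * N)), Nat.sub_self, coeff_map]
  have hndeg : q.natDegree = 2 * N := by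
    refine le_antisymm hdeg (le_natDegree_of_ne_zero ?_)
    rw [htop]; simpa using h0
  have hsplits : q.Splits := IsAlgClosed.splits q
  have hcard : q.roots.card = 2 * N := by
    rw [splits_iff_card_roots.mp hsplits, hndeg]
  set T := q.roots.filter (fun α => Complex.abs α < 1) with hTdef
  have hsplit := herm_roots_split (2 * N) q hq hdeg h0 hcirc
  rw [← hTdef] at hsplit
  have hcardT : T.card = N := by
    have hc := congrArg Multiset.card hsplit
    rw [Multiset.card_add, Multiset.card_map, hcard] at hc
    omega
  have hTne : ∀ α ∈ T, α ≠ 0 := by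
    intro α hα
    have hroots : α ∈ q.roots := (Multiset.mem_filter.mp hα).1
    have hroot : q.eval α = 0 := (Polynomial.mem_roots hq0).mp hroots
    rintro rfl
    rw [← Polynomial.coeff_zero_eq_eval_zero] at hroot
    exact h0 hroot
  set γ : ℝ := Complex.abs q.leadingCoeff * (T.map (fun α => (Complex.abs α)⁻¹)).prod
    with hγdef
  have hγpos : 0 < γ := by
    apply mul_pos (Complex.abs.pos (leadingCoeff_ne_zero.mpr hq0))
    apply Multiset.prod_pos
    intro x hx
    obtain ⟨α, hα, rfl⟩ := Multiset.mem_map.mp hx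
    exact inv_pos.mpr (Complex.abs.pos (hTne α hα))
  refine ⟨C ((Real.sqrt γ : ℝ) : ℂ) * (T.map (fun a => X - C a)).prod, ?_, ?_⟩
  · refine natDegree_mul_le.trans ?_
    rw [natDegree_C, natDegree_multiset_prod_X_sub_C_eq_card, hcardT, zero_add]
  · intro z hz
    set P : ℝ := (T.map (fun a => Complex.abs (z - a))).prod with hPdef
    set Q : ℝ := (T.map (fun α => (Complex.abs α)⁻¹)).prod with hQdef
    have key : ∀ a ∈ T, Complex.abs (z - (conj a)⁻¹)
        = Complex.abs (z - a) * (Complex.abs a)⁻¹ := fun a ha => by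
      rw [abs_sub_conj_inv hz (hTne a ha), div_eq_mul_inv]
    have habsq : Complex.abs (q.eval z)
        = Complex.abs q.leadingCoeff * (P * (P * Q)) := by
      conv_lhs => rw [hsplits.eq_prod_roots]
      rw [eval_mul, eval_C, map_mul, eval_multiset_prod, Multiset.map_map,
        map_multiset_prod, Multiset.map_map, hsplit, Multiset.map_add,
        Multiset.prod_add, Multiset.map_map]
      simp only [Function.comp_apply, eval_sub, eval_X, eval_C]
      have e2 : Multiset.map (fun α => Complex.abs (z - ((starRingEnd ℂ) α)⁻¹)) T
          = Multiset.map (fun a => Complex.abs (z - a) * (Complex.abs a)⁻¹) T :=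
        Multiset.map_congr rfl key
      rw [e2, Multiset.prod_map_mul, ← hPdef, ← hQdef]
    have habsw : Complex.abs ((C ((Real.sqrt γ : ℝ) : ℂ)
        * (T.map (fun a => X - C a)).prod).eval z) = Real.sqrt γ * P := by
      rw [eval_mul, eval_C, map_mul, Complex.abs_ofReal,
        abs_of_nonneg (Real.sqrt_nonneg γ), eval_multiset_prod, Multiset.map_map,
        map_multiset_prod, Multiset.map_map]
      simp only [Function.comp_apply, eval_sub, eval_X, eval_C, ← hPdef]
    rw [habsw, habsq, mul_pow, Real.sq_sqrt hγpos.le, hγdef]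
    ring

lemma eval_abs_le_sum_abs_coeff (p : Polynomial ℂ) {z : ℂ} (hz : Complex.abs z = 1) :
    Complex.abs (p.eval z)
      ≤ ∑ i ∈ Finset.range (p.natDegree + 1), Complex.abs (p.coeff i) := by
  rw [eval_eq_sum_range]
  refine (Complex.abs.sum_le _ _).trans ?_
  apply Finset.sum_le_sum
  intro i _
  rw [map_mul, map_pow, hz, one_pow, mul_one]

lemma coeff_abs_le (d : ℕ) (p : Polynomial ℂ) (hdeg : p.natDegree ≤ d) (B : ℝ)
    (hB : ∀ z, Complex.abs z = 1 → Complex.abs (p.eval z) ≤ B) (j : ℕ) :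
    Complex.abs (p.coeff j) ≤ B := by
  have hB0 : 0 ≤ B := le_trans (Complex.abs.nonneg _) (hB 1 (by simp))
  by_cases hjd : j ≤ d
  swap
  · rw [coeff_eq_zero_of_natDegree_lt (lt_of_le_of_lt hdeg (not_le.mp hjd))]
    simpa using hB0
  set M := d + 1 with hM
  have hjM : j < M := by omega
  set ζ : ℂ := Complex.exp (2 * Real.pi * Complex.I / M) with hζ
  have hprim : IsPrimitiveRoot ζ M := Complex.isPrimitiveRoot_exp M (by omega)
  have habsζ : Complex.abs ζ = 1 :=
    Complex.norm_eq_one_of_pow_eq_one hprim.pow_eq_one (by omega)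
  have hζ0 : ζ ≠ 0 := by
    intro h; rw [h] at habsζ; simp at habsζ
  have hev : ∀ l : ℕ, p.eval (ζ ^ l) = ∑ i ∈ Finset.range M, p.coeff i * (ζ ^ i) ^ l := by
    intro l
    rw [eval_eq_sum_range' (lt_of_le_of_lt hdeg (Nat.lt_succ_self d))]
    apply Finset.sum_congr rfl
    intro i _
    congr 1
    rw [← pow_mul, ← pow_mul, mul_comm]
  have hS : ∑ l ∈ Finset.range M, p.eval (ζ ^ l) * ((ζ ^ j)⁻¹) ^ l
      = p.coeff j * M := by
    calc ∑ l ∈ Finset.range M, p.eval (ζ ^ l) * ((ζ ^ j)⁻¹) ^ l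
        = ∑ l ∈ Finset.range M, ∑ i ∈ Finset.range M,
            p.coeff i * (ζ ^ i * (ζ ^ j)⁻¹) ^ l := by
          refine Finset.sum_congr rfl fun l _ => ?_
          rw [hev l, Finset.sum_mul]
          refine Finset.sum_congr rfl fun i _ => ?_
          rw [mul_pow, mul_assoc]
      _ = ∑ i ∈ Finset.range M, p.coeff i
            * ∑ l ∈ Finset.range M, (ζ ^ i * (ζ ^ j)⁻¹) ^ l := by
          rw [Finset.sum_comm]
          exact Finset.sum_congr rfl fun i _ => (Finset.mul_sum _ _ _).symm
      _ = p.coeff j * M := by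
          rw [Finset.sum_eq_single j]
          · rw [mul_inv_cancel₀ (pow_ne_zero j hζ0)]
            simp
          · intro i hi hij
            have hη1 : (ζ ^ i * (ζ ^ j)⁻¹) ≠ 1 := by
              intro h
              apply hij
              apply hprim.pow_inj (Finset.mem_range.mp hi) hjM
              have h2 := congrArg (· * ζ ^ j) h
              simpa [mul_assoc, inv_mul_cancel₀ (pow_ne_zero j hζ0)] using h2
            have hηM : (ζ ^ i * (ζ ^ j)⁻¹) ^ M = 1 := by
              rw [mul_pow, ← pow_mul, mul_comm i M, pow_mul, hprim.pow_eq_one,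
                one_pow, inv_pow, ← pow_mul, mul_comm j M, pow_mul,
                hprim.pow_eq_one, one_pow, inv_one, mul_one]
            rw [geom_sum_eq hη1, hηM, sub_self, zero_div, mul_zero]
          · intro h
            exact absurd (Finset.mem_range.mpr hjM) h
  have habsinv : ∀ l : ℕ, Complex.abs (((ζ ^ j)⁻¹) ^ l) = 1 := by
    intro l
    rw [map_pow, map_inv₀, map_pow, habsζ]
    simp
  have hbound : Complex.abs (p.coeff j) * M ≤ M * B := by
    have h1 : Complex.abs (p.coeff j * (M : ℂ)) = Complex.abs (p.coeff j) * M := by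
      rw [map_mul, Complex.abs_natCast]
    rw [← h1, ← hS]
    refine (Complex.abs.sum_le _ _).trans ?_
    have : ∀ l ∈ Finset.range M,
        Complex.abs (p.eval (ζ ^ l) * ((ζ ^ j)⁻¹) ^ l) ≤ B := by
      intro l _
      rw [map_mul, habsinv, mul_one]
      exact hB _ (by rw [map_pow, habsζ, one_pow])
    refine (Finset.sum_le_sum this).trans ?_
    rw [Finset.sum_const, Finset.card_range, nsmul_eq_mul]
  have hMpos : (0 : ℝ) < M := by positivity
  nlinarith [Complex.abs.nonneg (p.coeff j)]

lemma fejerRiesz (N : ℕ) (q : Polynomial ℂ)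
    (hq : reflect (2 * N) (q.map (starRingEnd ℂ)) = q)
    (hdeg : q.natDegree ≤ 2 * N)
    (hpos : ∀ z : ℂ, Complex.abs z = 1 → ∃ t : ℝ, 0 ≤ t ∧ q.eval z = z ^ N * t) :
    ∃ w : Polynomial ℂ, w.natDegree ≤ N ∧
      ∀ z : ℂ, Complex.abs z = 1 → ∀ t : ℝ, q.eval z = z ^ N * t →
        (Complex.abs (w.eval z)) ^ 2 = t := by
  classical
  by_cases hN : N = 0
  · subst hN
    obtain ⟨t₀, ht₀, hq1⟩ := hpos 1 (by simp)
    have hqC : q = C (q.coeff 0) := eq_C_of_natDegree_le_zero (by simpa using hdeg)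
    have hc : (q.coeff 0 : ℂ) = (t₀ : ℂ) := by
      have := hq1
      rw [hqC] at this
      simpa using this
    refine ⟨C ((Real.sqrt t₀ : ℝ) : ℂ), (natDegree_C _).le, ?_⟩
    intro z hz t ht
    rw [hqC] at ht
    simp only [eval_C, pow_zero, one_mul] at ht
    have htt : t = t₀ := by
      have : (t : ℂ) = (t₀ : ℂ) := by rw [← ht, hc]
      exact_mod_cast this
    rw [htt, eval_C, Complex.abs_ofReal, abs_of_nonneg (Real.sqrt_nonneg t₀),
      Real.sq_sqrt ht₀]
  -- main case N > 0
  set s : Polynomial ℂ := X ^ (2 * N) + C 3 * X ^ N + 1 with hsdef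
  have hs_map : s.map (starRingEnd ℂ) = s := by
    simp [hsdef, Polynomial.map_add, Polynomial.map_pow, Polynomial.map_mul, map_ofNat]
  have hs_reflect : reflect (2 * N) s = s := by
    rw [hsdef, reflect_add, reflect_add, reflect_monomial, reflect_C_mul,
      reflect_monomial, ← C_1, reflect_C, C_1]
    rw [revAt_le (le_refl (2 * N)), revAt_le (Nat.le_mul_of_pos_left N (by norm_num)),
      Nat.sub_self, Nat.two_mul N, Nat.add_sub_cancel]
    ring
  have hs0 : s.coeff 0 = 1 := by
    have h2N : 2 * N ≠ 0 := by omega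
    simp [hsdef, coeff_X_pow, h2N, (Nat.pos_of_ne_zero hN).ne]
    omega
  have hsdeg : s.natDegree ≤ 2 * N := by
    refine (natDegree_add_le _ _).trans (max_le ((natDegree_add_le _ _).trans
      (max_le ?_ ?_)) ?_)
    · exact (natDegree_X_pow _).le
    · exact (natDegree_C_mul_le _ _).trans ((natDegree_X_pow _).le.trans (by omega))
    · simp
  have hs_eval : ∀ z : ℂ, Complex.abs z = 1 →
      s.eval z = z ^ N * ((3 + 2 * (z ^ N).re : ℝ) : ℂ) ∧
        (1 : ℝ) ≤ 3 + 2 * (z ^ N).re := by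
    intro z hz
    have habsN : Complex.abs (z ^ N) = 1 := by rw [map_pow, hz, one_pow]
    have hcc : z ^ N * conj (z ^ N) = 1 := by
      rw [Complex.mul_conj]
      norm_cast
      rw [Complex.normSq_eq_abs, habsN]; norm_num
    constructor
    · have h2re : ((3 + 2 * (z ^ N).re : ℝ) : ℂ) = 3 + (z ^ N + conj (z ^ N)) := by
        push_cast
        rw [Complex.add_conj]
        push_cast
        ring
      rw [hsdef]
      simp only [eval_add, eval_pow, eval_X, eval_mul, eval_C, eval_one]
      rw [h2re, mul_add, mul_add, hcc, two_mul N, pow_add]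
      ring
    · have hre : |(z ^ N).re| ≤ 1 := by
        rw [← habsN]; exact Complex.abs_re_le_abs _
      rw [abs_le] at hre
      linarith [hre.1]
  set ε : ℕ → ℝ := fun k =>
    if q.coeff 0 = (-(1 / (k + 1 : ℝ)) : ℂ) then 1 / (2 * (k + 1)) else 1 / (k + 1)
    with hεdef
  have hε_pos : ∀ k, 0 < ε k := by
    intro k
    simp only [hεdef]
    split <;> positivity
  have hε_le : ∀ k, ε k ≤ 1 / (k + 1 : ℝ) := by
    intro k
    simp only [hεdef]
    split
    · rw [div_le_div_iff₀ (by positivity) (by positivity)]; nlinarith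
    · exact le_refl _
  have hε_le1 : ∀ k, ε k ≤ 1 := by
    intro k
    refine (hε_le k).trans ?_
    rw [div_le_one (by positivity)]
    linarith [Nat.cast_nonneg (α := ℝ) k]
  have hε_tendsto : Filter.Tendsto ε Filter.atTop (nhds 0) := by
    refine squeeze_zero (fun k => (hε_pos k).le) hε_le ?_
    exact tendsto_one_div_add_atTop_nhds_zero_nat
  have hε_ne : ∀ k, q.coeff 0 + ((ε k : ℝ) : ℂ) ≠ 0 := by
    intro k h
    by_cases hc : q.coeff 0 = (-(1 / (k + 1 : ℝ)) : ℂ)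
    · have hεk : ε k = 1 / (2 * (k + 1 : ℝ)) := by simp only [hεdef, if_pos hc]
      rw [hc, hεk] at h
      have h' : (-(1 / (k + 1 : ℝ)) + 1 / (2 * (k + 1 : ℝ))) = 0 := by
        exact_mod_cast h
      have hk : (0 : ℝ) < k + 1 := by positivity
      field_simp at h'
      linarith
    · have hεk : ε k = 1 / (k + 1 : ℝ) := by simp only [hεdef, if_neg hc]
      apply hc
      rw [eq_neg_of_add_eq_zero_left h, hεk]
      push_cast
      ring
  set qk : ℕ → Polynomial ℂ := fun k => q + C ((ε k : ℝ) : ℂ) * s with hqkdef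
  have hqk_reflect : ∀ k, reflect (2 * N) ((qk k).map (starRingEnd ℂ)) = qk k := by
    intro k
    simp only [hqkdef]
    rw [Polynomial.map_add, Polynomial.map_mul, map_C, Complex.conj_ofReal, hs_map,
      reflect_add, hq, reflect_C_mul, hs_reflect]
  have hqk_deg : ∀ k, (qk k).natDegree ≤ 2 * N := fun k =>
    (natDegree_add_le _ _).trans (max_le hdeg ((natDegree_C_mul_le _ _).trans hsdeg))
  have hqk_c0 : ∀ k, (qk k).coeff 0 ≠ 0 := by
    intro k
    simp only [hqkdef, coeff_add, coeff_C_mul, hs0, mul_one]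
    exact hε_ne k
  have hqk_eval : ∀ k, ∀ z : ℂ, Complex.abs z = 1 → ∀ t : ℝ, q.eval z = z ^ N * t →
      (qk k).eval z = z ^ N * ((t + ε k * (3 + 2 * (z ^ N).re) : ℝ) : ℂ) := by
    intro k z hz t ht
    obtain ⟨hse, _⟩ := hs_eval z hz
    simp only [hqkdef, eval_add, eval_mul, eval_C]
    rw [ht, hse]
    push_cast
    ring
  have hqk_circ : ∀ k, ∀ z : ℂ, Complex.abs z = 1 → (qk k).eval z ≠ 0 := by
    intro k z hz
    obtain ⟨t, ht0, ht⟩ := hpos z hz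
    obtain ⟨hse, hu1⟩ := hs_eval z hz
    rw [hqk_eval k z hz t ht]
    apply mul_ne_zero (pow_ne_zero _ (fun h0 => by simp [h0] at hz))
    rw [Ne, Complex.ofReal_eq_zero]
    nlinarith [hε_pos k]
  choose wk hwk using fun k =>
    halfFactor N (qk k) (hqk_reflect k) (hqk_deg k) (hqk_c0 k) (hqk_circ k)
  set B : ℝ := (∑ i ∈ Finset.range (q.natDegree + 1), Complex.abs (q.coeff i)) + 5
    with hBdef
  have hwk_bound : ∀ k, ∀ z : ℂ, Complex.abs z = 1 →
      Complex.abs ((wk k).eval z) ≤ Real.sqrt B := by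
    intro k z hz
    have h2 := (hwk k).2 z hz
    have hsabs : Complex.abs (s.eval z) ≤ 5 := by
      rw [hsdef]
      simp only [eval_add, eval_pow, eval_X, eval_mul, eval_C, eval_one]
      refine (Complex.abs.add_le _ _).trans ?_
      have h3 : Complex.abs (z ^ (2 * N) + 3 * z ^ N) ≤ 4 := by
        refine (Complex.abs.add_le _ _).trans ?_
        rw [map_pow, hz, one_pow, map_mul, map_pow, hz, one_pow, mul_one]
        norm_num [show Complex.abs 3 = 3 from Complex.norm_ofNat 3]
      rw [map_one]
      linarith
    have hqabs : Complex.abs ((qk k).eval z) ≤ B := by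
      simp only [hqkdef, eval_add, eval_mul, eval_C]
      refine (Complex.abs.add_le _ _).trans ?_
      rw [map_mul, Complex.abs_ofReal, abs_of_nonneg (hε_pos k).le]
      have h1 := eval_abs_le_sum_abs_coeff q hz
      have h4 : ε k * Complex.abs (s.eval z) ≤ 5 := by
        nlinarith [hε_le1 k, hε_pos k, Complex.abs.nonneg (s.eval z)]
      rw [hBdef]
      linarith
    have hsq : Complex.abs ((wk k).eval z) ^ 2 ≤ B := by rw [h2]; exact hqabs
    have h5 := Real.sqrt_le_sqrt hsq
    rwa [Real.sqrt_sq (Complex.abs.nonneg _)] at h5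
  have hcoeff_bound : ∀ k i, Complex.abs ((wk k).coeff i) ≤ Real.sqrt B :=
    fun k i => coeff_abs_le N (wk k) (hwk k).1 _ (fun z hz => hwk_bound k z hz) i
  set v : ℕ → (Fin (N + 1) → ℂ) := fun k i => (wk k).coeff i with hvdef
  have hv_mem : ∀ k, v k ∈ Metric.closedBall (0 : Fin (N + 1) → ℂ) (Real.sqrt B) := by
    intro k
    rw [mem_closedBall_zero_iff, pi_norm_le_iff_of_nonneg (Real.sqrt_nonneg B)]
    intro i
    rw [Complex.norm_eq_abs]
    exact hcoeff_bound k i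
  obtain ⟨a, -, φ, hφ, hconv⟩ :=
    (isCompact_closedBall (0 : Fin (N + 1) → ℂ) (Real.sqrt B)).tendsto_subseq hv_mem
  refine ⟨∑ i : Fin (N + 1), C (a i) * X ^ (i : ℕ), ?_, ?_⟩
  · refine natDegree_sum_le_of_forall_le _ _ ?_
    intro i _
    refine (natDegree_C_mul_le _ _).trans ((natDegree_X_pow (R := ℂ) (i : ℕ)).le.trans ?_)
    exact Nat.lt_succ_iff.mp i.isLt
  · intro z hz t ht
    obtain ⟨t₀, ht₀0, ht₀⟩ := hpos z hz
    have hzN : (z : ℂ) ^ N ≠ 0 := pow_ne_zero _ (fun h0 => by simp [h0] at hz)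
    have htt : t = t₀ := by
      have hc : ((t : ℝ) : ℂ) = ((t₀ : ℝ) : ℂ) :=
        mul_left_cancel₀ hzN (by rw [← ht, ← ht₀])
      exact_mod_cast hc
    have hevalk : ∀ k, Complex.abs ((wk k).eval z) ^ 2
        = t₀ + ε k * (3 + 2 * (z ^ N).re) := by
      intro k
      have hnn : 0 ≤ t₀ + ε k * (3 + 2 * (z ^ N).re) := by
        nlinarith [hε_pos k, (hs_eval z hz).2]
      rw [(hwk k).2 z hz, hqk_eval k z hz t₀ ht₀, map_mul, map_pow, hz, one_pow,
        one_mul, Complex.abs_ofReal, abs_of_nonneg hnn]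
    have hlim1 : Filter.Tendsto (fun k => Complex.abs ((wk (φ k)).eval z) ^ 2)
        Filter.atTop (nhds t₀) := by
      have heq : (fun k => Complex.abs ((wk (φ k)).eval z) ^ 2)
          = fun k => t₀ + ε (φ k) * (3 + 2 * (z ^ N).re) :=
        funext fun k => hevalk (φ k)
      rw [heq]
      have h0 : Filter.Tendsto (fun k => ε (φ k)) Filter.atTop (nhds 0) :=
        hε_tendsto.comp hφ.tendsto_atTop
      have h1 := (tendsto_const_nhds (x := t₀) (f := Filter.atTop (α := ℕ))).add
        (h0.mul_const (3 + 2 * (z ^ N).re))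
      simpa using h1
    have heval_w : ∀ k, (wk k).eval z = ∑ i : Fin (N + 1), (wk k).coeff i * z ^ (i : ℕ) := by
      intro k
      rw [eval_eq_sum_range' (lt_of_le_of_lt (hwk k).1 (Nat.lt_succ_self N)),
        ← Fin.sum_univ_eq_sum_range]
    have hlim2 : Filter.Tendsto (fun k => Complex.abs ((wk (φ k)).eval z) ^ 2)
        Filter.atTop
        (nhds (Complex.abs ((∑ i : Fin (N + 1), C (a i) * X ^ (i : ℕ)).eval z) ^ 2)) := by
      have hsum : Filter.Tendsto (fun k => (wk (φ k)).eval z) Filter.atTop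
          (nhds ((∑ i : Fin (N + 1), C (a i) * X ^ (i : ℕ)).eval z)) := by
        have hev2 : (∑ i : Fin (N + 1), C (a i) * X ^ (i : ℕ)).eval z
            = ∑ i : Fin (N + 1), a i * z ^ (i : ℕ) := by
          rw [eval_finset_sum]; simp
        rw [hev2]
        have heq2 : (fun k => (wk (φ k)).eval z)
            = fun k => ∑ i : Fin (N + 1), v (φ k) i * z ^ (i : ℕ) :=
          funext fun k => heval_w (φ k)
        rw [heq2]
        apply tendsto_finset_sum
        intro i _
        exact (((continuous_apply i).tendsto a).comp hconv).mul tendsto_const_nhds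
      exact ((Complex.continuous_abs.tendsto _).comp hsum).pow 2
    rw [htt]
    exact tendsto_nhds_unique hlim2 hlim1

lemma natDegree_reflect_le' (N : ℕ) (p : Polynomial ℂ) (hp : p.natDegree ≤ N) :
    (reflect N p).natDegree ≤ N := by
  rw [natDegree_le_iff_coeff_eq_zero]
  intro M hM
  rw [coeff_reflect]
  apply coeff_eq_zero_of_natDegree_lt
  rcases le_or_gt M N with h | h
  · rw [revAt_le h]; omega
  · rw [revAt_eq_self_of_lt h]
    omega

lemma sum_shift (n : ℕ) (f : ℕ → ℂ) {z : ℂ} (hz : z ≠ 0) :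
    ∑ i ∈ Finset.range (2 * n + 1), f i * z ^ i
      = z ^ n * ∑ k ∈ Finset.Icc (-(n : ℤ)) (n : ℤ), f ((k + n).toNat) * z ^ k := by
  rw [Finset.mul_sum]
  refine Finset.sum_nbij' (fun (i : ℕ) => (i : ℤ) - n) (fun (k : ℤ) => (k + n).toNat)
    ?_ ?_ ?_ ?_ ?_
  · intro i hi
    rw [Finset.mem_range] at hi
    rw [Finset.mem_Icc]
    omega
  · intro k hk
    rw [Finset.mem_Icc] at hk
    rw [Finset.mem_range]
    omega
  · intro i hi; omega
  · intro k hk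
    rw [Finset.mem_Icc] at hk
    omega
  · intro i hi
    rw [Finset.mem_range] at hi
    have h1 : ((i : ℤ) - n + n).toNat = i := by omega
    rw [h1]
    have h2 : z ^ n * z ^ ((i : ℤ) - n) = z ^ i := by
      rw [← zpow_natCast z n, ← zpow_add₀ hz, ← zpow_natCast z i]
      congr 1
      omega
    rw [← h2]
    ring


/-- Evaluation of a Laurent polynomial given by its coefficient function,
supported on exponents in `[-n, n]`. -/
noncomputable def laurentEval (n : ℕ) (c : ℤ → ℂ) (z : ℂ) : ℂ :=
  ∑ k ∈ Finset.Icc (-(n : ℤ)) (n : ℤ), c k * z ^ k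

theorem polynomial_state_completion (m n : ℕ) (c : Fin m → ℤ → ℂ)
    (hsupp : ∀ x : Fin m, ∀ k : ℤ, n < |k| → c x k = 0)
    (hle : ∀ z : ℂ, ‖z‖ = 1 →
      ∑ x : Fin m, ‖laurentEval n (c x) z‖ ^ 2 ≤ 1) :
    ∃ c' : ℤ → ℂ, (∀ k : ℤ, n < |k| → c' k = 0) ∧
      ∀ z : ℂ, ‖z‖ = 1 →
        ∑ x : Fin m, ‖laurentEval n (c x) z‖ ^ 2 +
          ‖laurentEval n c' z‖ ^ 2 = 1 := by
  classical
  replace hle : ∀ z : ℂ, Complex.abs z = 1 →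
      ∑ x : Fin m, Complex.abs (laurentEval n (c x) z) ^ 2 ≤ 1 := hle
  suffices H : ∃ c' : ℤ → ℂ, (∀ k : ℤ, n < |k| → c' k = 0) ∧
      ∀ z : ℂ, Complex.abs z = 1 →
        ∑ x : Fin m, Complex.abs (laurentEval n (c x) z) ^ 2 +
          Complex.abs (laurentEval n c' z) ^ 2 = 1 from H
  set Q : Fin m → Polynomial ℂ :=
    fun x => ∑ i ∈ Finset.range (2 * n + 1), C (c x ((i : ℤ) - n)) * X ^ i with hQdef
  have hQdeg : ∀ x, (Q x).natDegree ≤ 2 * n := by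
    intro x
    refine natDegree_sum_le_of_forall_le _ _ fun i hi => ?_
    refine (natDegree_C_mul_le _ _).trans ((natDegree_X_pow (R := ℂ) i).le.trans ?_)
    exact Nat.lt_succ_iff.mp (Finset.mem_range.mp hi)
  have hQeval : ∀ x, ∀ z : ℂ, z ≠ 0 →
      (Q x).eval z = z ^ n * laurentEval n (c x) z := by
    intro x z hz
    rw [hQdef]
    rw [eval_finset_sum]
    simp only [eval_mul, eval_C, eval_pow, eval_X]
    rw [sum_shift n _ hz]
    unfold laurentEval
    congr 1
    refine Finset.sum_congr rfl fun k hk => ?_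
    obtain ⟨hk1, hk2⟩ := Finset.mem_Icc.mp hk
    congr 2
    omega
  set q : Polynomial ℂ :=
    X ^ (2 * n) - ∑ x : Fin m, reflect (2 * n) ((Q x).map (starRingEnd ℂ)) * Q x
    with hqdef
  have hQmapdeg : ∀ x, ((Q x).map (starRingEnd ℂ)).natDegree ≤ 2 * n :=
    fun x => natDegree_map_le.trans (hQdeg x)
  have hrdeg : ∀ x, (reflect (2 * n) ((Q x).map (starRingEnd ℂ))).natDegree ≤ 2 * n :=
    fun x => natDegree_reflect_le' _ _ (hQmapdeg x)
  have hqdeg : q.natDegree ≤ 2 * (2 * n) := by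
    rw [hqdef]
    refine (natDegree_sub_le _ _).trans (max_le ((natDegree_X_pow _).le.trans
      (by omega)) ?_)
    refine natDegree_sum_le_of_forall_le _ _ fun x _ => ?_
    refine natDegree_mul_le.trans ?_
    have := hrdeg x
    have := hQdeg x
    omega
  have hqherm : reflect (2 * (2 * n)) (q.map (starRingEnd ℂ)) = q := by
    rw [hqdef, Polynomial.map_sub, Polynomial.map_pow, map_X, Polynomial.map_sum,
      reflect_sub, reflect_finset_sum]
    have hX : reflect (2 * (2 * n)) ((X : Polynomial ℂ) ^ (2 * n)) = X ^ (2 * n) := by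
      rw [reflect_monomial, revAt_le (by omega)]
      congr 1
      omega
    rw [hX]
    congr 1
    refine Finset.sum_congr rfl fun x _ => ?_
    rw [Polynomial.map_mul, reflect_map, map_conj_map_conj]
    have h44 : 2 * (2 * n) = 2 * n + 2 * n := by omega
    rw [h44, reflect_mul _ _ (natDegree_reflect_le' _ _ (hQdeg x)) (hQmapdeg x),
      reflect_reflect']
    rw [reflect_map]
    ring
  have hqeval_circ : ∀ z : ℂ, Complex.abs z = 1 →
      q.eval z = z ^ (2 * n) *
        ((1 - ∑ x : Fin m, Complex.abs (laurentEval n (c x) z) ^ 2 : ℝ) : ℂ) := by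
    intro z hz
    have hz0 : z ≠ 0 := fun h0 => by simp [h0] at hz
    have hzinv : z⁻¹ ≠ 0 := inv_ne_zero hz0
    have habs : ∀ x, Complex.abs ((Q x).eval z)
        = Complex.abs (laurentEval n (c x) z) := by
      intro x
      rw [hQeval x z hz0, map_mul, map_pow, hz, one_pow, one_mul]
    have hterm : ∀ x, (reflect (2 * n) ((Q x).map (starRingEnd ℂ))).eval z * (Q x).eval z
        = z ^ (2 * n) * ((Complex.abs (laurentEval n (c x) z) ^ 2 : ℝ) : ℂ) := by
      intro x
      have h1 := eval_reflect' (2 * n) ((Q x).map (starRingEnd ℂ)) (hQmapdeg x) hzinv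
      rw [inv_inv] at h1
      have h2 : (reflect (2 * n) ((Q x).map (starRingEnd ℂ))).eval z
          = conj ((Q x).eval z) * z ^ (2 * n) := by
        have h3 : ((Q x).map (starRingEnd ℂ)).eval z⁻¹ = conj ((Q x).eval z) := by
          rw [Complex.inv_eq_conj (by rwa [Complex.norm_eq_abs]), eval_map,
            eval₂_at_apply]
        rw [← h3, ← h1, mul_assoc, inv_pow, inv_mul_cancel₀ (pow_ne_zero _ hz0),
          mul_one]
      rw [h2]
      have h4 : conj ((Q x).eval z) * (Q x).eval z
          = ((Complex.abs ((Q x).eval z) ^ 2 : ℝ) : ℂ) := by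
        rw [mul_comm, Complex.mul_conj, Complex.normSq_eq_abs]
      calc conj ((Q x).eval z) * z ^ (2 * n) * (Q x).eval z
          = conj ((Q x).eval z) * (Q x).eval z * z ^ (2 * n) := by ring
        _ = z ^ (2 * n) * ((Complex.abs (laurentEval n (c x) z) ^ 2 : ℝ) : ℂ) := by
            rw [h4, habs x]; ring
    rw [hqdef]
    rw [eval_sub, eval_pow, eval_X, eval_finset_sum]
    simp only [eval_mul]
    rw [Finset.sum_congr rfl fun x _ => hterm x]
    rw [← Finset.mul_sum]
    push_cast
    ring
  have hqpos : ∀ z : ℂ, Complex.abs z = 1 →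
      ∃ t : ℝ, 0 ≤ t ∧ q.eval z = z ^ (2 * n) * t := by
    intro z hz
    exact ⟨_, by linarith [hle z hz], hqeval_circ z hz⟩
  obtain ⟨w, hwdeg, hweval⟩ := fejerRiesz (2 * n) q hqherm hqdeg hqpos
  refine ⟨fun k => if k ∈ Finset.Icc (-(n : ℤ)) (n : ℤ) then w.coeff ((k + n).toNat)
    else 0, ?_, ?_⟩
  · intro k hk
    dsimp only
    rw [if_neg]
    intro hmem
    obtain ⟨h1, h2⟩ := Finset.mem_Icc.mp hmem
    have h3 : |k| ≤ (n : ℤ) := abs_le.mpr ⟨h1, h2⟩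
    linarith
  · intro z hz
    have hz0 : z ≠ 0 := fun h0 => by simp [h0] at hz
    have hwz := hweval z hz _ (hqeval_circ z hz)
    have hev : z ^ n * laurentEval n
        (fun k => if k ∈ Finset.Icc (-(n : ℤ)) (n : ℤ) then w.coeff ((k + n).toNat)
          else 0) z = w.eval z := by
      rw [eval_eq_sum_range' (lt_of_le_of_lt hwdeg (Nat.lt_succ_self (2 * n))),
        sum_shift n w.coeff hz0]
      congr 1
      unfold laurentEval
      refine Finset.sum_congr rfl fun k hk => ?_
      dsimp only
      rw [if_pos hk]
    have habs' : Complex.abs (laurentEval n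
        (fun k => if k ∈ Finset.Icc (-(n : ℤ)) (n : ℤ) then w.coeff ((k + n).toNat)
          else 0) z) = Complex.abs (w.eval z) := by
      rw [← hev, map_mul, map_pow, hz, one_pow, one_mul]
    rw [habs', hwz]
    ring
end

section
/- Fejér–Riesz theorem: Let R(z) = ∑_{k=−n}^{n} r_k z^k be a Laurent polynomial that is real and nonnegative for all z on the unit circle. Then there exists a polynomial w(z) of degree at most n such that R(z) = |w(z)|² for all z with |z| = 1. -/
open Polynomial Complex Finset

noncomputable section FRaux

/-- The polynomial `z^n * R(z)`. -/
noncomputable def FRpoly (n : ℕ) (c : ℤ → ℂ) : Polynomial ℂ :=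
  ∑ j ∈ Finset.range (2 * n + 1), Polynomial.C (c ((j : ℤ) - n)) * Polynomial.X ^ j

lemma FRpoly_eval (n : ℕ) (c : ℤ → ℂ) (z : ℂ) :
    (FRpoly n c).eval z = ∑ j ∈ Finset.range (2 * n + 1), c ((j : ℤ) - n) * z ^ j := by
  simp [FRpoly, Polynomial.eval_finset_sum]

lemma FRpoly_coeff (n : ℕ) (c : ℤ → ℂ) (j : ℕ) (hj : j < 2 * n + 1) :
    (FRpoly n c).coeff j = c ((j : ℤ) - n) := by
  rw [FRpoly, Polynomial.finset_sum_coeff]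
  simp only [Polynomial.coeff_C_mul, Polynomial.coeff_X_pow]
  rw [Finset.sum_eq_single j]
  · simp
  · intro b _ hb; simp [Ne.symm hb]
  · intro h; exact absurd (Finset.mem_range.2 hj) h

lemma FRpoly_natDegree_le (n : ℕ) (c : ℤ → ℂ) : (FRpoly n c).natDegree ≤ 2 * n := by
  apply Polynomial.natDegree_sum_le_of_forall_le
  intro j hj
  refine le_trans (Polynomial.natDegree_C_mul_le _ _) ?_
  simpa using Nat.lt_succ_iff.mp (Finset.mem_range.mp hj)

lemma FR_sum_shift (n : ℕ) (c : ℤ → ℂ) (z : ℂ) (hz : z ≠ 0) :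
    ∑ k ∈ Finset.Icc (-(n : ℤ)) (n : ℤ), c k * z ^ k
      = z ^ (-(n : ℤ)) * (FRpoly n c).eval z := by
  rw [FRpoly_eval, Finset.mul_sum]
  refine Finset.sum_nbij' (fun k => (k + n).toNat) (fun j => (j : ℤ) - n) ?_ ?_ ?_ ?_ ?_
  · intro k hk; simp only [Finset.mem_Icc] at hk; simp only [Finset.mem_range]; omega
  · intro j hj; simp only [Finset.mem_range] at hj; simp only [Finset.mem_Icc]; omega
  · intro k hk; simp only [Finset.mem_Icc] at hk; simp; omega
  · intro j hj; simp only [Finset.mem_range] at hj; simp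
  · intro k hk
    simp only [Finset.mem_Icc] at hk
    have h1 : ((((k + n).toNat : ℤ))) = k + n := by omega
    rw [h1]
    simp only [add_sub_cancel_right]
    rw [← zpow_natCast z ((k+n).toNat), h1, zpow_add₀ hz, zpow_neg]
    field_simp

/-- The set of points on the unit circle of form exp(θi) is infinite. -/
lemma FR_infinite_circle : Set.Infinite {z : ℂ | ∃ θ : ℝ, z = Complex.exp (θ * Complex.I)} := by
  have h : Set.InjOn (fun θ : ℝ => Complex.exp (θ * Complex.I)) (Set.Icc 0 Real.pi) := by
    intro a ha b hb hab
    have : Real.cos a = Real.cos b := by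
      have := congrArg Complex.re hab
      simpa [Complex.exp_ofReal_mul_I_re] using this
    exact Real.injOn_cos ha hb this
  have hinf : (Set.Icc (0:ℝ) Real.pi).Infinite :=
    Set.Icc_infinite (by positivity)
  apply Set.Infinite.mono (s := (fun θ : ℝ => Complex.exp (θ * Complex.I)) '' (Set.Icc 0 Real.pi))
  · rintro z ⟨θ, _, rfl⟩; exact ⟨θ, rfl⟩
  · exact Set.Infinite.image h hinf

end FRaux

section FR2
open Complex

lemma FR_conj_inv {z : ℂ} (hz : ‖z‖ = 1) : (starRingEnd ℂ) z = z⁻¹ := by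
  have h1 : (starRingEnd ℂ) z * z = 1 := by
    rw [mul_comm, Complex.mul_conj]
    norm_cast
    rw [Complex.normSq_eq_norm_sq, hz]; norm_num
  exact eq_inv_of_mul_eq_one_left h1

lemma FR_symm (n : ℕ) (r : ℤ → ℂ)
    (hsupp : ∀ k : ℤ, (n : ℤ) < |k| → r k = 0)
    (hreal : ∀ θ : ℝ,
      (∑ k ∈ Finset.Icc (-(n : ℤ)) (n : ℤ), r k * Complex.exp (θ * Complex.I) ^ k).im = 0) :
    ∀ k : ℤ, (starRingEnd ℂ) (r (-k)) = r k := by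
  have hD : FRpoly n (fun k => r k - (starRingEnd ℂ) (r (-k))) = 0 := by
    apply Polynomial.eq_zero_of_infinite_isRoot
    apply Set.Infinite.mono ?_ FR_infinite_circle
    rintro z ⟨θ, rfl⟩
    set z := Complex.exp (θ * Complex.I) with hzdef
    have hz : z ≠ 0 := Complex.exp_ne_zero _
    have habs : ‖z‖ = 1 := Complex.norm_exp_ofReal_mul_I θ
    have hS : (starRingEnd ℂ) (∑ k ∈ Finset.Icc (-(n : ℤ)) (n : ℤ), r k * z ^ k)
        = ∑ k ∈ Finset.Icc (-(n : ℤ)) (n : ℤ), r k * z ^ k :=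
      Complex.conj_eq_iff_im.2 (hreal θ)
    have hconj : (starRingEnd ℂ) (∑ k ∈ Finset.Icc (-(n : ℤ)) (n : ℤ), r k * z ^ k)
        = ∑ k ∈ Finset.Icc (-(n : ℤ)) (n : ℤ), (starRingEnd ℂ) (r (-k)) * z ^ k := by
      rw [map_sum]
      refine Finset.sum_nbij' (fun k => -k) (fun k => -k) ?_ ?_ ?_ ?_ ?_
      · intro k hk; simp only [Finset.mem_Icc] at hk ⊢; omega
      · intro k hk; simp only [Finset.mem_Icc] at hk ⊢; omega
      · intro k _; ring
      · intro k _; ring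
      · intro k _
        rw [map_mul, map_zpow₀, FR_conj_inv habs, neg_neg, inv_zpow, ← zpow_neg]
    have hzero : ∑ k ∈ Finset.Icc (-(n : ℤ)) (n : ℤ),
        (r k - (starRingEnd ℂ) (r (-k))) * z ^ k = 0 := by
      have h2 : ∑ k ∈ Finset.Icc (-(n : ℤ)) (n : ℤ),
          (r k - (starRingEnd ℂ) (r (-k))) * z ^ k
          = (∑ k ∈ Finset.Icc (-(n : ℤ)) (n : ℤ), r k * z ^ k)
            - ∑ k ∈ Finset.Icc (-(n : ℤ)) (n : ℤ), (starRingEnd ℂ) (r (-k)) * z ^ k := by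
        rw [← Finset.sum_sub_distrib]
        exact Finset.sum_congr rfl fun k _ => by ring
      rw [h2, ← hconj, hS, sub_self]
    rw [FR_sum_shift n _ z hz] at hzero
    have := mul_eq_zero.mp hzero
    rcases this with h | h
    · exact absurd h (zpow_ne_zero _ hz)
    · exact h
  intro k
  rcases le_or_gt |k| (n : ℤ) with hk | hk
  · have hk' := abs_le.mp hk
    have hco := FRpoly_coeff n (fun k => r k - (starRingEnd ℂ) (r (-k))) (k + n).toNat (by omega)
    rw [hD] at hco
    simp only [Polynomial.coeff_zero] at hco
    have h2 : (((k + (n:ℤ)).toNat : ℤ)) - n = k := by omega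
    rw [h2] at hco
    have := hco.symm
    rw [sub_eq_zero] at this
    exact this.symm
  · rw [hsupp k hk, hsupp (-k) (by rwa [abs_neg]), map_zero]

end FR2

lemma FR_halve {α : Type*} [DecidableEq α] (σ : α → α) (hσ : ∀ a, σ (σ a) = a) :
    ∀ M : Multiset α, M.map σ = M → (∀ a, σ a = a → Even (M.count a)) →
      ∃ N : Multiset α, N + N.map σ = M := by
  have hinj : Function.Injective σ := Function.LeftInverse.injective hσ
  intro M
  induction M using Multiset.strongInductionOn with
  | _ M ih =>
    intro hmap heven
    rcases Multiset.empty_or_exists_mem M with rfl | ⟨a, ha⟩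
    · exact ⟨0, by simp⟩
    by_cases hfix : σ a = a
    · have hc := heven a hfix
      have h1 : 1 ≤ M.count a := Multiset.one_le_count_iff_mem.2 ha
      have h2 : 2 ≤ M.count a := by rcases hc with ⟨m, hm⟩; omega
      obtain ⟨M₁, rfl⟩ := Multiset.exists_cons_of_mem ha
      have ha1 : a ∈ M₁ := by
        rw [← Multiset.one_le_count_iff_mem]
        have := h2
        rw [Multiset.count_cons_self] at this
        omega
      obtain ⟨M₂, rfl⟩ := Multiset.exists_cons_of_mem ha1
      have hmap₂ : M₂.map σ = M₂ := by
        rw [Multiset.map_cons, Multiset.map_cons, hfix] at hmap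
        rwa [Multiset.cons_inj_right, Multiset.cons_inj_right] at hmap
      have heven₂ : ∀ b, σ b = b → Even (M₂.count b) := by
        intro b hb
        have := heven b hb
        by_cases hba : b = a
        · subst hba
          rw [Multiset.count_cons_self, Multiset.count_cons_self] at this
          rcases this with ⟨m, hm⟩; exact ⟨m - 1, by omega⟩
        · rwa [Multiset.count_cons_of_ne hba, Multiset.count_cons_of_ne hba] at this
      obtain ⟨N₂, hN₂⟩ := ih M₂
        (lt_trans (Multiset.lt_cons_self _ _) (Multiset.lt_cons_self _ _)) hmap₂ heven₂
      refine ⟨a ::ₘ N₂, ?_⟩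
      rw [Multiset.map_cons, hfix, Multiset.cons_add, Multiset.add_cons, hN₂]
    · have hsa : σ a ∈ M := by
        rw [← Multiset.one_le_count_iff_mem]
        rw [← hmap, Multiset.count_map_eq_count' σ M hinj]
        exact Multiset.one_le_count_iff_mem.2 ha
      obtain ⟨M₁, rfl⟩ := Multiset.exists_cons_of_mem ha
      have hsa1 : σ a ∈ M₁ := by
        rcases Multiset.mem_cons.1 hsa with h | h
        · exact absurd h hfix
        · exact h
      obtain ⟨M₂, rfl⟩ := Multiset.exists_cons_of_mem hsa1
      have hmap₂ : M₂.map σ = M₂ := by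
        rw [Multiset.map_cons, Multiset.map_cons, hσ] at hmap
        rw [Multiset.cons_swap] at hmap
        rwa [Multiset.cons_inj_right, Multiset.cons_inj_right] at hmap
      have heven₂ : ∀ b, σ b = b → Even (M₂.count b) := by
        intro b hb
        have hba : b ≠ a := fun h => hfix (h ▸ hb)
        have hbsa : b ≠ σ a := by
          intro h
          subst h
          rw [hσ] at hb
          exact hfix hb.symm
        have := heven b hb
        rwa [Multiset.count_cons_of_ne hba, Multiset.count_cons_of_ne hbsa] at this
      obtain ⟨N₂, hN₂⟩ := ih M₂
        (lt_trans (Multiset.lt_cons_self _ _) (Multiset.lt_cons_self _ _)) hmap₂ heven₂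
      refine ⟨a ::ₘ N₂, ?_⟩
      rw [Multiset.map_cons, Multiset.cons_add, Multiset.add_cons, hN₂]

lemma FR_even_mult (n : ℕ) (P : Polynomial ℂ) (hP : P ≠ 0)
    (hIm : ∀ θ : ℝ, (Complex.exp (θ * Complex.I) ^ (-(n : ℤ))
      * P.eval (Complex.exp (θ * Complex.I))).im = 0)
    (hRe : ∀ θ : ℝ, 0 ≤ (Complex.exp (θ * Complex.I) ^ (-(n : ℤ))
      * P.eval (Complex.exp (θ * Complex.I))).re)
    (ρ : ℂ) (hρ : ‖ρ‖ = 1) :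
    Even (P.rootMultiplicity ρ) := by
  by_contra hodd
  have hodd' : Odd (P.rootMultiplicity ρ) := Nat.not_even_iff_odd.1 hodd
  set m := P.rootMultiplicity ρ with hm
  set Q := P /ₘ (X - C ρ) ^ m with hQ
  have hfac : (X - C ρ) ^ m * Q = P := P.pow_mul_divByMonic_rootMultiplicity_eq ρ
  have hQρ : Q.eval ρ ≠ 0 := Polynomial.eval_divByMonic_pow_rootMultiplicity_ne_zero ρ hP
  set θ₀ := ρ.arg with hθ₀
  have hρθ : Complex.exp (θ₀ * Complex.I) = ρ := by
    have := Complex.norm_mul_exp_arg_mul_I ρ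
    rwa [hρ, Complex.ofReal_one, one_mul] at this
  -- the auxiliary continuous function
  set g : ℝ → ℂ := fun θ => Complex.exp ((-(n : ℤ) : ℂ) * (θ * Complex.I))
      * (Complex.exp ((((θ + θ₀) / 2 : ℝ) : ℂ) * Complex.I) * (2 * Complex.I)) ^ m
      * Q.eval (Complex.exp (θ * Complex.I)) with hg
  have h2i : ∀ b : ℝ, Complex.exp ((b : ℂ) * Complex.I) - Complex.exp ((-b : ℂ) * Complex.I)
      = 2 * Complex.I * (Real.sin b : ℂ) := by
    intro b
    rw [Complex.exp_mul_I, Complex.exp_mul_I, Complex.cos_neg, Complex.sin_neg,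
      ← Complex.ofReal_sin]
    ring
  have hsplit : ∀ θ : ℝ, Complex.exp ((θ : ℂ) * Complex.I) - ρ
      = Complex.exp ((((θ + θ₀) / 2 : ℝ) : ℂ) * Complex.I)
        * (2 * Complex.I * (Real.sin ((θ - θ₀) / 2) : ℂ)) := by
    intro θ
    rw [← hρθ]
    have e1 : (θ : ℂ) * Complex.I
        = (((θ + θ₀) / 2 : ℝ) : ℂ) * Complex.I + (((θ - θ₀) / 2 : ℝ) : ℂ) * Complex.I := by
      push_cast; ring
    have e2 : (θ₀ : ℂ) * Complex.I
        = (((θ + θ₀) / 2 : ℝ) : ℂ) * Complex.I + (-(((θ - θ₀) / 2 : ℝ) : ℂ)) * Complex.I := by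
      push_cast; ring
    rw [e1, e2, Complex.exp_add, Complex.exp_add, ← mul_sub]
    rw [show (-(((θ - θ₀) / 2 : ℝ) : ℂ)) = ((-((θ - θ₀) / 2) : ℝ) : ℂ) by push_cast; ring]
    rw [show ((-((θ - θ₀) / 2) : ℝ) : ℂ) * Complex.I = (-(((θ - θ₀) / 2 : ℝ) : ℂ)) * Complex.I
      by push_cast; ring]
    rw [h2i ((θ - θ₀) / 2)]
  have hkey : ∀ θ : ℝ, Complex.exp (θ * Complex.I) ^ (-(n : ℤ))
      * P.eval (Complex.exp (θ * Complex.I))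
      = ((Real.sin ((θ - θ₀) / 2) : ℂ)) ^ m * g θ := by
    intro θ
    rw [← hfac, Polynomial.eval_mul, Polynomial.eval_pow, Polynomial.eval_sub,
      Polynomial.eval_X, Polynomial.eval_C, hsplit θ]
    rw [show Complex.exp (θ * Complex.I) ^ (-(n : ℤ))
      = Complex.exp ((-(n : ℤ) : ℂ) * (θ * Complex.I)) by
        rw [← Complex.exp_int_mul]; congr 1; push_cast; ring]
    rw [hg]
    simp only []
    rw [mul_pow, mul_pow]
    ring
  have hgcont : ContinuousAt g θ₀ := by
    apply ContinuousAt.mul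
    apply ContinuousAt.mul
    · exact (Complex.continuous_exp.comp (by continuity)).continuousAt
    · exact ((Complex.continuous_exp.comp (by continuity)).mul continuous_const).pow m
        |>.continuousAt
    · exact (Q.continuous.comp (Complex.continuous_exp.comp (by continuity))).continuousAt
  have hg0 : g θ₀ ≠ 0 := by
    rw [hg]
    simp only []
    apply mul_ne_zero
    apply mul_ne_zero
    · exact Complex.exp_ne_zero _
    · exact pow_ne_zero _ (mul_ne_zero (Complex.exp_ne_zero _)
        (by simp [Complex.I_ne_zero]))
    · rwa [hρθ]
  -- closed sets
  have hCp : IsClosed {z : ℂ | z.im = 0 ∧ 0 ≤ z.re} :=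
    (isClosed_eq Complex.continuous_im continuous_const).inter
      (isClosed_le continuous_const Complex.continuous_re)
  have hCm : IsClosed {z : ℂ | z.im = 0 ∧ z.re ≤ 0} :=
    (isClosed_eq Complex.continuous_im continuous_const).inter
      (isClosed_le Complex.continuous_re continuous_const)
  -- right limit
  have hgθ₀_right : g θ₀ ∈ {z : ℂ | z.im = 0 ∧ 0 ≤ z.re} := by
    refine hCp.mem_of_tendsto (hgcont.tendsto.mono_left (nhdsWithin_le_nhds (s := Set.Ioi θ₀))) ?_
    have hIoo : Set.Ioo θ₀ (θ₀ + Real.pi) ∈ nhdsWithin θ₀ (Set.Ioi θ₀) :=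
      Ioo_mem_nhdsGT_of_mem ⟨le_refl θ₀, by linarith [Real.pi_pos]⟩
    filter_upwards [hIoo] with θ hθ
    obtain ⟨h1, h2⟩ := hθ
    have hs : 0 < Real.sin ((θ - θ₀) / 2) :=
      Real.sin_pos_of_pos_of_lt_pi (by linarith) (by linarith [Real.pi_pos])
    have hsm : 0 < Real.sin ((θ - θ₀) / 2) ^ m := pow_pos hs m
    have him := hIm θ
    have hre := hRe θ
    rw [hkey θ, ← Complex.ofReal_pow, Complex.im_ofReal_mul] at him
    rw [hkey θ, ← Complex.ofReal_pow, Complex.re_ofReal_mul] at hre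
    exact ⟨(mul_eq_zero.mp him).resolve_left (ne_of_gt hsm),
      nonneg_of_mul_nonneg_right hre hsm⟩
  -- left limit
  have hgθ₀_left : g θ₀ ∈ {z : ℂ | z.im = 0 ∧ z.re ≤ 0} := by
    refine hCm.mem_of_tendsto (hgcont.tendsto.mono_left (nhdsWithin_le_nhds (s := Set.Iio θ₀))) ?_
    have hIoo : Set.Ioo (θ₀ - Real.pi) θ₀ ∈ nhdsWithin θ₀ (Set.Iio θ₀) :=
      Ioo_mem_nhdsLT_of_mem ⟨by linarith [Real.pi_pos], le_refl θ₀⟩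
    filter_upwards [hIoo] with θ hθ
    obtain ⟨h1, h2⟩ := hθ
    have hs : Real.sin ((θ - θ₀) / 2) < 0 := by
      have := Real.sin_pos_of_pos_of_lt_pi (x := -((θ - θ₀) / 2)) (by linarith)
        (by linarith [Real.pi_pos])
      rw [Real.sin_neg] at this
      linarith
    have hsm : Real.sin ((θ - θ₀) / 2) ^ m < 0 := hodd'.pow_neg hs
    have him := hIm θ
    have hre := hRe θ
    rw [hkey θ, ← Complex.ofReal_pow, Complex.im_ofReal_mul] at him
    rw [hkey θ, ← Complex.ofReal_pow, Complex.re_ofReal_mul] at hre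
    refine ⟨(mul_eq_zero.mp him).resolve_left (ne_of_lt hsm), ?_⟩
    nlinarith
  apply hg0
  apply Complex.ext
  · exact le_antisymm hgθ₀_left.2 hgθ₀_right.2
  · simpa using hgθ₀_right.1

lemma FR_eval_prod (M : Multiset ℂ) (z : ℂ) :
    Polynomial.eval z (M.map (fun a => X - C a)).prod = (M.map (fun a => z - a)).prod := by
  rw [Polynomial.eval_multiset_prod, Multiset.map_map]
  exact congrArg _ (Multiset.map_congr rfl fun x _ => by simp)

lemma FR_key (n : ℕ) (r : ℤ → ℂ)
    (hsupp : ∀ k : ℤ, (n : ℤ) < |k| → r k = 0)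
    (hreal : ∀ θ : ℝ,
      (∑ k ∈ Finset.Icc (-(n : ℤ)) (n : ℤ), r k * Complex.exp (θ * Complex.I) ^ k).im = 0)
    (hnonneg : ∀ θ : ℝ,
      0 ≤ (∑ k ∈ Finset.Icc (-(n : ℤ)) (n : ℤ), r k * Complex.exp (θ * Complex.I) ^ k).re)
    (hrn : r n ≠ 0) :
    ∃ w : Polynomial ℂ, w.natDegree ≤ n ∧
      ∀ z : ℂ, ‖z‖ = 1 →
        ∑ k ∈ Finset.Icc (-(n : ℤ)) (n : ℤ), r k * z ^ k =
          w.eval z * (starRingEnd ℂ) (w.eval z) := by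
  have hsym := FR_symm n r hsupp hreal
  set P := FRpoly n r with hP
  have hcoefftop : P.coeff (2 * n) = r n := by
    rw [hP, FRpoly_coeff n r (2 * n) (by omega)]
    congr 1; push_cast; ring
  have hPdeg : P.natDegree = 2 * n :=
    le_antisymm (FRpoly_natDegree_le n r)
      (Polynomial.le_natDegree_of_ne_zero (by rw [hcoefftop]; exact hrn))
  have hP0 : P ≠ 0 := fun h => hrn (by rw [← hcoefftop, h, Polynomial.coeff_zero])
  have hlead : P.leadingCoeff = r n := by
    rw [Polynomial.leadingCoeff, hPdeg, hcoefftop]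
  have hsplits : P.Splits := IsAlgClosed.splits P
  set M := P.roots with hM
  have hfac : P = C (r n) * (M.map fun a => X - C a).prod := by
    rw [← hlead]; exact (Polynomial.C_leadingCoeff_mul_prod_multiset_X_sub_C (Polynomial.splits_iff_card_roots.mp hsplits)).symm
  have hcard : Multiset.card M = 2 * n := by
    rw [hM, Polynomial.splits_iff_card_roots.mp hsplits, hPdeg]
  have hMne0 : ∀ ρ ∈ M, ρ ≠ 0 := by
    intro ρ hρmem hρ0
    have : P.IsRoot 0 := by
      subst hρ0
      exact Polynomial.isRoot_of_mem_roots hρmem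
    rw [Polynomial.IsRoot, FRpoly_eval] at this
    rw [Finset.sum_eq_single 0] at this
    · simp only [pow_zero, mul_one, Nat.cast_zero, zero_sub] at this
      apply hrn
      rw [← hsym n, this, map_zero]
    · intro b _ hb; simp [pow_eq_zero_iff, hb]
    · intro h; exact absurd (Finset.mem_range.2 (by omega)) h
  -- root symmetry
  set σ : ℂ → ℂ := fun ρ => ((starRingEnd ℂ) ρ)⁻¹ with hσdef
  have hσσ : ∀ ρ, σ (σ ρ) = ρ := by
    intro ρ; simp [hσdef, map_inv₀]
  have claim1 : ∀ z : ℂ, z ≠ 0 → Polynomial.eval z P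
      = z ^ (2 * n) * (starRingEnd ℂ) (Polynomial.eval (((starRingEnd ℂ) z)⁻¹) P) := by
    intro z hz
    rw [FRpoly_eval, FRpoly_eval, map_sum, Finset.mul_sum]
    have hW : ∀ j ∈ Finset.range (2 * n + 1),
        z ^ (2 * n) * (starRingEnd ℂ) (r ((j : ℤ) - n) * ((starRingEnd ℂ) z)⁻¹ ^ j)
        = (starRingEnd ℂ) (r ((j : ℤ) - n)) * z ^ (2 * n - j) := by
      intro j hj
      rw [Finset.mem_range] at hj
      rw [map_mul, map_pow, map_inv₀, Complex.conj_conj, inv_pow,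
        pow_sub₀ z hz (by omega : j ≤ 2 * n)]
      ring
    rw [Finset.sum_congr rfl hW]
    rw [← Finset.sum_range_reflect
      (fun j => (starRingEnd ℂ) (r ((j : ℤ) - n)) * z ^ (2 * n - j)) (2 * n + 1)]
    apply Finset.sum_congr rfl
    intro j hj
    rw [Finset.mem_range] at hj
    have h1 : 2 * n + 1 - 1 - j = 2 * n - j := by omega
    rw [h1]
    have h2 : ((2 * n - j : ℕ) : ℤ) - n = -((j : ℤ) - n) := by omega
    have h3 : 2 * n - (2 * n - j) = j := by omega
    rw [h2, h3, hsym]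
  have claim2 : ∀ z : ℂ, z ≠ 0 → Polynomial.eval z P
      = ((starRingEnd ℂ) (r n) * (M.map fun ρ => -(starRingEnd ℂ) ρ).prod)
        * (M.map fun ρ => z - σ ρ).prod := by
    intro z hz
    rw [claim1 z hz]
    have hwz : ((starRingEnd ℂ) z)⁻¹ ≠ 0 := by
      simp [_root_.map_eq_zero, hz]
    rw [hfac]
    rw [Polynomial.eval_mul, Polynomial.eval_C, FR_eval_prod]
    rw [map_mul, map_multiset_prod, Multiset.map_map]
    have hmapeq : M.map ((starRingEnd ℂ) ∘ fun a => ((starRingEnd ℂ) z)⁻¹ - a)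
        = M.map (fun a => z⁻¹ - (starRingEnd ℂ) a) := by
      apply Multiset.map_congr rfl
      intro a _
      simp [map_inv₀]
    rw [hmapeq]
    have hzpow : z ^ (2 * n) = (M.map (fun _ => z)).prod := by
      rw [Multiset.map_const', Multiset.prod_replicate, hcard]
    rw [hzpow, mul_comm ((M.map fun _ => z).prod), mul_assoc, ← Multiset.prod_map_mul]
    have hmapeq2 : (M.map fun a => (z⁻¹ - (starRingEnd ℂ) a) * z)
        = M.map (fun a => -(starRingEnd ℂ) a * (z - σ a)) := by
      apply Multiset.map_congr rfl
      intro a ha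
      have ha0 : a ≠ 0 := hMne0 a ha
      have hca : (starRingEnd ℂ) a ≠ 0 := by simp [_root_.map_eq_zero, ha0]
      rw [hσdef]
      field_simp
      ring
    rw [hmapeq2, Multiset.prod_map_mul]
    ring
  set Cst : ℂ := (starRingEnd ℂ) (r n) * (M.map fun ρ => -(starRingEnd ℂ) ρ).prod with hCst
  have hCst0 : Cst ≠ 0 := by
    apply mul_ne_zero
    · simp [_root_.map_eq_zero, hrn]
    · apply Multiset.prod_ne_zero
      intro h0
      rw [Multiset.mem_map] at h0
      obtain ⟨a, ha, ha0⟩ := h0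
      exact hMne0 a ha (by simpa [_root_.map_eq_zero] using ha0.symm)
  have claim3 : P = C Cst * ((M.map σ).map fun a => X - C a).prod := by
    have : ∀ z : ℂ, z ≠ 0 →
        Polynomial.eval z (P - C Cst * ((M.map σ).map fun a => X - C a).prod) = 0 := by
      intro z hz
      rw [Polynomial.eval_sub, Polynomial.eval_mul, Polynomial.eval_C, FR_eval_prod,
        Multiset.map_map, claim2 z hz]
      rw [sub_eq_zero]
      rfl
    have hzero : P - C Cst * ((M.map σ).map fun a => X - C a).prod = 0 := by
      apply Polynomial.eq_zero_of_infinite_isRoot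
      apply Set.Infinite.mono ?_ FR_infinite_circle
      rintro z ⟨θ, rfl⟩
      exact this _ (Complex.exp_ne_zero _)
    exact sub_eq_zero.mp hzero
  have hMσ : M.map σ = M := by
    have h := congrArg Polynomial.roots claim3
    rw [Polynomial.roots_C_mul _ hCst0, Polynomial.roots_multiset_prod_X_sub_C] at h
    exact h.symm
  have heven : ∀ a, σ a = a → Even (M.count a) := by
    intro a hfix
    by_cases haM : a ∈ M
    · have ha0 : a ≠ 0 := hMne0 a haM
      have habs : ‖a‖ = 1 := by
        have h1 : a * (starRingEnd ℂ) a = 1 := by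
          have h2 : ((starRingEnd ℂ) a)⁻¹ = a := hfix
          have hca : (starRingEnd ℂ) a ≠ 0 := by simp [_root_.map_eq_zero, ha0]
          have h3 := inv_mul_cancel₀ hca
          rwa [h2] at h3
        rw [Complex.mul_conj] at h1
        have h3 : Complex.normSq a = 1 := by exact_mod_cast h1
        rw [Complex.norm_def, h3, Real.sqrt_one]
      rw [hM, Polynomial.count_roots]
      apply FR_even_mult n P hP0 ?_ ?_ a habs
      · intro θ
        have := hreal θ
        rwa [FR_sum_shift n r _ (Complex.exp_ne_zero _)] at this
      · intro θ
        have := hnonneg θ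
        rwa [FR_sum_shift n r _ (Complex.exp_ne_zero _)] at this
    · rw [Multiset.count_eq_zero.2 haM]; exact Even.zero
  obtain ⟨N, hN⟩ := FR_halve σ hσσ M hMσ heven
  have hNcard : Multiset.card N = n := by
    have hc := congrArg Multiset.card hN
    rw [Multiset.card_add, Multiset.card_map, hcard] at hc
    omega
  have hNsub : ∀ ρ ∈ N, ρ ∈ M := fun ρ h => by
    rw [← hN]; exact Multiset.mem_add.2 (Or.inl h)
  set w₀ := (N.map fun a => X - C a).prod with hw₀
  have hw₀deg : w₀.natDegree = n := by
    rw [hw₀, Polynomial.natDegree_multiset_prod_X_sub_C_eq_card, hNcard]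
  set K := r n * (-1) ^ n * (N.map σ).prod with hK
  have hKmain : ∀ z : ℂ, ‖z‖ = 1 →
      ∑ k ∈ Finset.Icc (-(n : ℤ)) (n : ℤ), r k * z ^ k
        = K * (Polynomial.eval z w₀ * (starRingEnd ℂ) (Polynomial.eval z w₀)) := by
    intro z habs
    have hz : z ≠ 0 := by
      intro h; rw [h] at habs; simp at habs
    rw [FR_sum_shift n r z hz]
    rw [← hP]
    rw [hfac, Polynomial.eval_mul, Polynomial.eval_C, FR_eval_prod, ← hN,
      Multiset.map_add, Multiset.prod_add, Multiset.map_map]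
    have hT : N.map ((fun a => z - a) ∘ σ)
        = N.map (fun ρ => (-z) * σ ρ * (starRingEnd ℂ) (z - ρ)) := by
      apply Multiset.map_congr rfl
      intro ρ hρ
      have hρ0 : ρ ≠ 0 := hMne0 ρ (hNsub ρ hρ)
      have hcρ : (starRingEnd ℂ) ρ ≠ 0 := by simp [_root_.map_eq_zero, hρ0]
      simp only [Function.comp_apply, hσdef, map_sub, FR_conj_inv habs]
      field_simp
      ring
    rw [hT, Multiset.prod_map_mul, Multiset.prod_map_mul]
    have hconst : (N.map fun _ => -z).prod = (-1) ^ n * z ^ n := by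
      rw [Multiset.map_const', Multiset.prod_replicate, hNcard, neg_pow]
    rw [hconst]
    have hcw : (starRingEnd ℂ) (Polynomial.eval z w₀) = (N.map fun ρ => (starRingEnd ℂ) (z - ρ)).prod := by
      rw [hw₀, FR_eval_prod, map_multiset_prod, Multiset.map_map]
      rfl
    rw [hcw, hw₀, FR_eval_prod]
    have hzz : z ^ (-(n : ℤ)) * z ^ n = 1 := by
      rw [← zpow_natCast z n, ← zpow_add₀ hz]
      simp
    linear_combination (r n * (-1) ^ n * (N.map σ).prod * (N.map fun a => z - a).prod
      * (N.map fun ρ => (starRingEnd ℂ) (z - ρ)).prod) * hzz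
  have hK0 : K ≠ 0 := by
    rw [hK]
    apply mul_ne_zero (mul_ne_zero hrn (pow_ne_zero _ (by norm_num)))
    apply Multiset.prod_ne_zero
    intro h0
    rw [Multiset.mem_map] at h0
    obtain ⟨a, ha, ha0⟩ := h0
    have ha' : a ≠ 0 := hMne0 a (hNsub a ha)
    rw [hσdef] at ha0
    simp [_root_.map_eq_zero, ha'] at ha0
  have hw₀0 : w₀ ≠ 0 := by
    apply Polynomial.Monic.ne_zero
    apply Polynomial.monic_multiset_prod_of_monic
    intro a _
    exact Polynomial.monic_X_sub_C a
  have hex : ∃ θ : ℝ, Polynomial.eval (Complex.exp (θ * Complex.I)) w₀ ≠ 0 := by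
    by_contra hcon
    push_neg at hcon
    apply hw₀0
    apply Polynomial.eq_zero_of_infinite_isRoot
    apply Set.Infinite.mono ?_ FR_infinite_circle
    rintro z ⟨θ, rfl⟩
    exact hcon θ
  obtain ⟨θ₁, hθ₁⟩ := hex
  have hz₀abs : ‖Complex.exp (θ₁ * Complex.I)‖ = 1 :=
    Complex.norm_exp_ofReal_mul_I θ₁
  have hmain₀ := hKmain _ hz₀abs
  set E := Polynomial.eval (Complex.exp (θ₁ * Complex.I)) w₀ with hE
  have hEconj : E * (starRingEnd ℂ) E = ((Complex.normSq E : ℝ) : ℂ) := Complex.mul_conj E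
  have ht : 0 < Complex.normSq E := Complex.normSq_pos.2 hθ₁
  rw [hEconj] at hmain₀
  have hKim : K.im = 0 := by
    have him := hreal θ₁
    rw [hmain₀, mul_comm, Complex.im_ofReal_mul] at him
    exact (mul_eq_zero.mp him).resolve_left (ne_of_gt ht)
  have hKre : 0 < K.re := by
    have hre := hnonneg θ₁
    rw [hmain₀, mul_comm, Complex.re_ofReal_mul] at hre
    have h1 : 0 ≤ K.re := nonneg_of_mul_nonneg_right hre ht
    rcases lt_or_eq_of_le h1 with h | h
    · exact h
    · exfalso
      exact hK0 (Complex.ext h.symm hKim)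
  have hKval : ((K.re : ℝ) : ℂ) = K := Complex.ext rfl (by simp [hKim])
  refine ⟨C ((Real.sqrt K.re : ℝ) : ℂ) * w₀, ?_, ?_⟩
  · exact le_trans (Polynomial.natDegree_C_mul_le _ _) (le_of_eq hw₀deg)
  · intro z hz
    rw [hKmain z hz]
    rw [Polynomial.eval_mul, Polynomial.eval_C, map_mul, Complex.conj_ofReal]
    have hsq : ((Real.sqrt K.re : ℝ) : ℂ) * ((Real.sqrt K.re : ℝ) : ℂ) = ((K.re : ℝ) : ℂ) := by
      rw [← Complex.ofReal_mul, Real.mul_self_sqrt (le_of_lt hKre)]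
    linear_combination (-(Polynomial.eval z w₀ * (starRingEnd ℂ) (Polynomial.eval z w₀))) * hsq
      + (-(Polynomial.eval z w₀ * (starRingEnd ℂ) (Polynomial.eval z w₀))) * hKval
theorem fejer_riesz (n : ℕ) (r : ℤ → ℂ)
    (hsupp : ∀ k : ℤ, n < |k| → r k = 0)
    (hreal : ∀ θ : ℝ,
      (∑ k ∈ Finset.Icc (-(n : ℤ)) (n : ℤ), r k * Complex.exp (θ * Complex.I) ^ k).im = 0)
    (hnonneg : ∀ θ : ℝ,
      0 ≤ (∑ k ∈ Finset.Icc (-(n : ℤ)) (n : ℤ), r k * Complex.exp (θ * Complex.I) ^ k).re) :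
    ∃ w : Polynomial ℂ, w.natDegree ≤ n ∧
      ∀ z : ℂ, ‖z‖ = 1 →
        ∑ k ∈ Finset.Icc (-(n : ℤ)) (n : ℤ), r k * z ^ k =
          w.eval z * (starRingEnd ℂ) (w.eval z) := by
  induction n generalizing r with
  | zero =>
    by_cases h0 : r 0 = 0
    · refine ⟨0, by simp, ?_⟩
      intro z hz
      simp [h0]
    · exact FR_key 0 r hsupp hreal hnonneg (by exact_mod_cast h0)
  | succ m ih =>
    by_cases hrn : r ((m + 1 : ℕ) : ℤ) = 0
    · have hsym := FR_symm (m + 1) r hsupp hreal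
      have hneg : r (-((m + 1 : ℕ) : ℤ)) = 0 := by
        have := hsym ((m + 1 : ℕ) : ℤ)
        rw [hrn] at this
        simpa [_root_.map_eq_zero] using this
      have hsub : Finset.Icc (-(m : ℤ)) (m : ℤ)
          ⊆ Finset.Icc (-((m + 1 : ℕ) : ℤ)) ((m + 1 : ℕ) : ℤ) := by
        intro k hk
        simp only [Finset.mem_Icc] at hk ⊢
        push_cast
        omega
      have hsum : ∀ z : ℂ,
          ∑ k ∈ Finset.Icc (-((m + 1 : ℕ) : ℤ)) ((m + 1 : ℕ) : ℤ), r k * z ^ k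
          = ∑ k ∈ Finset.Icc (-(m : ℤ)) (m : ℤ), r k * z ^ k := by
        intro z
        symm
        apply Finset.sum_subset hsub
        intro k hk hnk
        simp only [Finset.mem_Icc] at hk hnk
        have hcast : ((m + 1 : ℕ) : ℤ) = (m : ℤ) + 1 := by push_cast; ring
        rw [hcast] at hk
        have : k = (m : ℤ) + 1 ∨ k = -((m : ℤ) + 1) := by omega
        rcases this with h | h
        · rw [h, ← hcast, hrn, zero_mul]
        · rw [h]
          rw [show -((m : ℤ) + 1) = -((m + 1 : ℕ) : ℤ) by push_cast; ring, hneg, zero_mul]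
      have hsupp' : ∀ k : ℤ, (m : ℤ) < |k| → r k = 0 := by
        intro k hk
        by_cases h : ((m + 1 : ℕ) : ℤ) < |k|
        · exact hsupp k h
        · have hcast : ((m + 1 : ℕ) : ℤ) = (m : ℤ) + 1 := by push_cast; ring
          rw [hcast] at h
          have h' := not_lt.mp h
          have : k = (m : ℤ) + 1 ∨ k = -((m : ℤ) + 1) := by
            rcases abs_cases k with ⟨he, _⟩ | ⟨he, _⟩ <;> omega
          rcases this with hh | hh
          · rw [hh, ← hcast]; exact hrn
          · rw [hh, show -((m : ℤ) + 1) = -((m + 1 : ℕ) : ℤ) by push_cast; ring]; exact hneg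
      obtain ⟨w, hdeg, hval⟩ := ih r hsupp'
        (fun θ => by rw [← hsum]; exact hreal θ)
        (fun θ => by rw [← hsum]; exact hnonneg θ)
      refine ⟨w, le_trans hdeg (by omega), ?_⟩
      intro z hz
      rw [hsum z]
      exact hval z hz
    · exact FR_key (m + 1) r hsupp hreal hnonneg hrn
end
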